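/- arXiv:2409.10261 — 8 statements merged into one kernel-verified Lean document; each statement's English description precedes it below -/
import Mathlib

section
/- Every chordal graph that is not complete contains two nonadjacent simplicial vertices. -/
open scoped Classical

/-- A graph is chordal if every cycle of length greater than three has a chord, i.e.,
an edge joining two vertices of the cycle that is not itself an edge of the cycle. -/
def SimpleGraph.IsChordal {V : Type*} (G : SimpleGraph V) : Prop :=
  ∀ ⦃v : V⦄ (w : G.Walk v v), w.IsCycle → 3 < w.length →
    ∃ a b : V, G.Adj a b ∧ a ∈ w.support ∧ b ∈ w.support ∧ s(a, b) ∉ w.edges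

/-- A vertex is simplicial if its neighborhood is a clique. -/
def SimpleGraph.IsSimplicial {V : Type*} (G : SimpleGraph V) (x : V) : Prop :=
  G.IsClique (G.neighborSet x)

namespace ChordalAux
open SimpleGraph Walk

variable {V : Type*} {G : SimpleGraph V}

/-- Reachability with all support inside `U`. -/
def Reach (G : SimpleGraph V) (U : Set V) (x y : V) : Prop :=
  ∃ w : G.Walk x y, ∀ z ∈ w.support, z ∈ U

lemma reach_refl {U : Set V} {x : V} (hx : x ∈ U) : Reach G U x x :=
  ⟨Walk.nil, by simp [hx]⟩

lemma reach_symm {U : Set V} {x y : V} (h : Reach G U x y) : Reach G U y x := by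
  obtain ⟨w, hw⟩ := h
  exact ⟨w.reverse, by intro z hz; rw [Walk.support_reverse, List.mem_reverse] at hz; exact hw z hz⟩

lemma reach_trans {U : Set V} {x y z : V} (h : Reach G U x y) (h' : Reach G U y z) :
    Reach G U x z := by
  obtain ⟨w, hw⟩ := h; obtain ⟨w', hw'⟩ := h'
  refine ⟨w.append w', ?_⟩
  intro t ht
  rcases (Walk.mem_support_append_iff _ _).1 ht with h | h
  · exact hw t h
  · exact hw' t h

lemma reach_adj {U : Set V} {x y z : V} (h : Reach G U x y) (hadj : G.Adj y z) (hz : z ∈ U) :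
    Reach G U x z := by
  obtain ⟨w, hw⟩ := h
  refine ⟨w.append (Walk.cons hadj Walk.nil), ?_⟩
  intro t ht
  rcases (Walk.mem_support_append_iff _ _).1 ht with h | h
  · exact hw t h
  · simp only [Walk.support_cons, Walk.support_nil, List.mem_cons, List.mem_singleton] at h
    rcases h with rfl | h
    · exact hw t w.end_mem_support
    · simp at h; subst h; exact hz

lemma reach_of_mem_support {U : Set V} {a t : V} (w : G.Walk a t)
    (h : ∀ z ∈ w.support, z ∈ U) {z : V} (hz : z ∈ w.support) : Reach G U a z :=
  ⟨w.takeUntil z hz, fun q hq => h q (Walk.support_takeUntil_subset _ _ hq)⟩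


lemma edges_of_length_one {x y : V} {w : G.Walk x y} (h : w.length = 1) :
    w.edges = [s(x, y)] := by
  cases w with
  | nil => simp at h
  | cons hadj p =>
    simp only [Walk.length_cons, Nat.add_eq_right] at h
    have hvy := Walk.eq_of_length_eq_zero h
    subst hvy
    have hpe : p.edges = [] := List.length_eq_zero_iff.mp (by rw [Walk.length_edges, h])
    rw [Walk.edges_cons, hpe]

lemma two_le_length {x y : V} {w : G.Walk x y} (hxy : x ≠ y) (he : s(x, y) ∉ w.edges) :
    2 ≤ w.length := by
  rcases Nat.lt_or_ge w.length 2 with h | h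
  · interval_cases h' : w.length
    · exact absurd (Walk.eq_of_length_eq_zero h') hxy
    · exact absurd (by rw [edges_of_length_one h']; simp) he
  · exact h

/-- Shortcut lemma: a chord on a walk yields a strictly shorter walk with support inside. -/
lemma shortcut {u v x y : V} (w : G.Walk u v) (hadj : G.Adj x y)
    (hx : x ∈ w.support) (hy : y ∈ w.support) (he : s(x, y) ∉ w.edges) :
    ∃ w' : G.Walk u v, w'.length < w.length ∧ ∀ z ∈ w'.support, z ∈ w.support := by
  have hlw : w.length = (w.takeUntil x hx).length + (w.dropUntil x hx).length := by
    conv_lhs => rw [← w.take_spec hx]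
    rw [Walk.length_append]
  by_cases hyr : y ∈ (w.dropUntil x hx).support
  · set r := w.dropUntil x hx with hr
    have hlr : r.length = (r.takeUntil y hyr).length + (r.dropUntil y hyr).length := by
      conv_lhs => rw [← r.take_spec hyr]
      rw [Walk.length_append]
    have h2 : 2 ≤ (r.takeUntil y hyr).length := by
      refine two_le_length hadj.ne fun hmem => he ?_
      exact (Walk.edges_dropUntil_subset w hx) ((Walk.edges_takeUntil_subset r hyr) hmem)
    refine ⟨(w.takeUntil x hx).append (Walk.cons hadj (r.dropUntil y hyr)), ?_, ?_⟩
    · rw [Walk.length_append, Walk.length_cons]; omega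
    · intro z hz
      rcases (Walk.mem_support_append_iff _ _).1 hz with h | h
      · exact Walk.support_takeUntil_subset w hx h
      · rw [Walk.support_cons, List.mem_cons] at h
        rcases h with rfl | h
        · exact hx
        · exact Walk.support_dropUntil_subset w hx (Walk.support_dropUntil_subset r hyr h)
  · have hyq : y ∈ (w.takeUntil x hx).support := by
      have := hy
      conv at this => rw [← w.take_spec hx]
      rcases (Walk.mem_support_append_iff _ _).1 this with h | h
      · exact h
      · exact absurd h hyr
    set q := w.takeUntil x hx with hq
    have hlq : q.length = (q.takeUntil y hyq).length + (q.dropUntil y hyq).length := by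
      conv_lhs => rw [← q.take_spec hyq]
      rw [Walk.length_append]
    have h2 : 2 ≤ (q.dropUntil y hyq).length := by
      refine two_le_length hadj.ne.symm fun hmem => he ?_
      rw [Sym2.eq_swap]
      exact (Walk.edges_takeUntil_subset w hx) ((Walk.edges_dropUntil_subset q hyq) hmem)
    refine ⟨(q.takeUntil y hyq).append (Walk.cons hadj.symm (w.dropUntil x hx)), ?_, ?_⟩
    · rw [Walk.length_append, Walk.length_cons]; omega
    · intro z hz
      rcases (Walk.mem_support_append_iff _ _).1 hz with h | h
      · exact Walk.support_takeUntil_subset w hx (Walk.support_takeUntil_subset q hyq h)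
      · rw [Walk.support_cons, List.mem_cons] at h
        rcases h with rfl | h
        · exact Walk.support_takeUntil_subset w hx hyq
        · exact Walk.support_dropUntil_subset w hx h

lemma exists_min_path {u v : V} (P : V → Prop)
    (hw : ∃ w : G.Walk u v, ∀ z ∈ w.support, P z) :
    ∃ p : G.Walk u v, p.IsPath ∧ (∀ z ∈ p.support, P z) ∧
      ∀ w : G.Walk u v, (∀ z ∈ w.support, P z) → p.length ≤ w.length := by
  have hQ : ∃ n, ∃ w : G.Walk u v, w.length = n ∧ ∀ z ∈ w.support, P z := by
    obtain ⟨w, hw⟩ := hw; exact ⟨w.length, w, rfl, hw⟩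
  obtain ⟨w, hwl, hws⟩ := Nat.find_spec hQ
  refine ⟨w.bypass, w.bypass_isPath, fun z hz => hws z (w.support_bypass_subset hz), ?_⟩
  intro w' hw'
  calc w.bypass.length ≤ w.length := w.length_bypass_le
    _ = Nat.find hQ := hwl
    _ ≤ w'.length := Nat.find_min' hQ ⟨w', rfl, hw'⟩

lemma adj_of_walk_support_pair {a b : V} (w : G.Walk a b)
    (h : ∀ z ∈ w.support, z = a ∨ z = b) (hab : a ≠ b) : G.Adj a b := by
  cases w with
  | nil => exact absurd rfl hab
  | cons hadj p =>
    rcases h _ (by rw [Walk.support_cons]; exact List.mem_cons_of_mem _ p.start_mem_support)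
      with h1 | h1
    · exact absurd (h1 ▸ hadj) (G.irrefl)
    · exact h1 ▸ hadj

lemma exists_nbr {c d u : V} {T : Set V} (w : G.Walk c d)
    (hsupp : ∀ z ∈ w.support, z ∈ T ∨ z = u) (hu : u ∈ w.support) (hcu : c ≠ u) :
    ∃ x, G.Adj u x ∧ x ∈ T ∧ Reach G T c x := by
  set t := w.takeUntil u hu with ht
  have hcount : t.support.count u = 1 := w.count_support_takeUntil_eq_one hu
  obtain ⟨x, hadj, r, hrev⟩ := Walk.exists_eq_cons_of_ne hcu.symm t.reverse
  have hsup : t.support.reverse = u :: r.support := by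
    rw [← Walk.support_reverse, hrev, Walk.support_cons]
  have hur : u ∉ r.support := by
    intro hmem
    have h1 : (u :: r.support).count u = 1 := by
      rw [← hsup, List.count_reverse]; exact hcount
    rw [List.count_cons_self] at h1
    have h0 : r.support.count u = 0 := by omega
    exact (List.count_eq_zero.mp h0) hmem
  have hrT : ∀ z ∈ r.support, z ∈ T := by
    intro z hz
    have hzt : z ∈ t.support := by
      rw [← List.mem_reverse, hsup]; exact List.mem_cons_of_mem _ hz
    rcases hsupp z (Walk.support_takeUntil_subset w hu hzt) with h | rfl
    · exact h
    · exact absurd hz hur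
  refine ⟨x, hadj, hrT x r.start_mem_support, ⟨r.reverse, ?_⟩⟩
  intro z hz
  rw [Walk.support_reverse, List.mem_reverse] at hz
  exact hrT z hz



lemma no_chordless (hch : G.IsChordal) (A B : Set V) (u v : V)
    (hdisj : ∀ z, z ∈ A → z ∈ B → False)
    (huv : u ≠ v) (hnadj : ¬ G.Adj u v)
    (hAB : ∀ x ∈ A, ∀ y ∈ B, ¬ G.Adj x y)
    (hwA : ∃ w : G.Walk u v, ∀ z ∈ w.support, z ∈ A ∨ z = u ∨ z = v)
    (hwB : ∃ w : G.Walk u v, ∀ z ∈ w.support, z ∈ B ∨ z = u ∨ z = v) : False := by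
  obtain ⟨P1, hP1path, hP1supp, hP1min⟩ := exists_min_path _ hwA
  obtain ⟨P2, hP2path, hP2supp, hP2min⟩ := exists_min_path _ hwB
  have hP1len : 2 ≤ P1.length := two_le_length huv fun h => hnadj (P1.adj_of_mem_edges h)
  have hP2len : 2 ≤ P2.length := two_le_length huv fun h => hnadj (P2.adj_of_mem_edges h)
  have hvtail : ∀ z ∈ P2.reverse.support.tail, z ∈ P2.support ∧ z ≠ v := by
    intro z hz
    have hnd : P2.reverse.support.Nodup := (Walk.isPath_def _).1 hP2path.reverse
    rw [Walk.support_eq_cons P2.reverse] at hnd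
    constructor
    · have : z ∈ P2.reverse.support := by
        rw [Walk.support_eq_cons P2.reverse]; exact List.mem_cons_of_mem _ hz
      rwa [Walk.support_reverse, List.mem_reverse] at this
    · rintro rfl
      exact (List.nodup_cons.1 hnd).1 hz
  have hcyc : (P1.append P2.reverse).IsCycle := by
    cases P1 with
    | nil => exact absurd rfl huv
    | @cons _ x1 _ hadj p =>
      have hup : u ∉ p.support := ((Walk.cons_isPath_iff hadj p).1 hP1path).2
      have hppath : p.IsPath := ((Walk.cons_isPath_iff hadj p).1 hP1path).1
      have hx1v : x1 ≠ v := by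
        rintro rfl
        have := (Walk.isPath_iff_eq_nil).1 hppath
        subst this
        simp at hP1len
      have hx1A : x1 ∈ A := by
        rcases hP1supp x1 (by rw [Walk.support_cons]; exact List.mem_cons_of_mem _ p.start_mem_support)
          with h | h | h
        · exact h
        · exact absurd h (fun h' => hup (h' ▸ p.start_mem_support))
        · exact absurd h hx1v
      rw [Walk.cons_append, Walk.cons_isCycle_iff]
      constructor
      · rw [Walk.isPath_def, Walk.support_append]
        refine ((Walk.isPath_def p).1 hppath).append (((Walk.isPath_def _).1 hP2path.reverse).tail) ?_
        intro z hz1 hz2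
        obtain ⟨hz2s, hz2v⟩ := hvtail z hz2
        have hzu : z ≠ u := fun h => hup (h ▸ hz1)
        have hzA : z ∈ A := by
          rcases hP1supp z (by rw [Walk.support_cons]; exact List.mem_cons_of_mem _ hz1)
            with h | h | h
          · exact h
          · exact absurd h hzu
          · exact absurd h hz2v
        have hzB : z ∈ B := by
          rcases hP2supp z hz2s with h | h | h
          · exact h
          · exact absurd h hzu
          · exact absurd h hz2v
        exact hdisj z hzA hzB
      · intro hmem
        rw [Walk.edges_append, List.mem_append] at hmem
        rcases hmem with h | h
        · exact hup (p.fst_mem_support_of_mem_edges h)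
        · rw [Walk.edges_reverse, List.mem_reverse] at h
          have hx1P2 : x1 ∈ P2.support := P2.snd_mem_support_of_mem_edges h
          have hx1B : x1 ∈ B := by
            rcases hP2supp x1 hx1P2 with h' | h' | h'
            · exact h'
            · exact absurd h' hadj.ne'
            · exact absurd h' hx1v
          exact hdisj x1 hx1A hx1B
  have hlen : 3 < (P1.append P2.reverse).length := by
    rw [Walk.length_append, Walk.length_reverse]; omega
  obtain ⟨x, y, hxy, hxs, hys, hne⟩ := hch _ hcyc hlen
  have hmem : ∀ z, z ∈ (P1.append P2.reverse).support → z ∈ P1.support ∨ z ∈ P2.support := by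
    intro z hz
    rcases (Walk.mem_support_append_iff _ _).1 hz with h | h
    · exact Or.inl h
    · rw [Walk.support_reverse, List.mem_reverse] at h; exact Or.inr h
  have hne1 : s(x, y) ∉ P1.edges := fun h =>
    hne (by rw [Walk.edges_append, List.mem_append]; exact Or.inl h)
  have hne2 : s(x, y) ∉ P2.edges := fun h =>
    hne (by rw [Walk.edges_append, List.mem_append, Walk.edges_reverse, List.mem_reverse]
            exact Or.inr h)
  have con1 : x ∈ P1.support → y ∈ P1.support → False := by
    intro hx hy
    obtain ⟨w', hlt, hsub⟩ := shortcut P1 hxy hx hy hne1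
    have := hP1min w' fun z hz => hP1supp z (hsub z hz)
    omega
  have con2 : x ∈ P2.support → y ∈ P2.support → False := by
    intro hx hy
    obtain ⟨w', hlt, hsub⟩ := shortcut P2 hxy hx hy hne2
    have := hP2min w' fun z hz => hP2supp z (hsub z hz)
    omega
  have mixed : ∀ x' y', G.Adj x' y' → x' ∈ P1.support → x' ∉ P2.support →
      y' ∈ P2.support → y' ∉ P1.support → False := by
    intro x' y' hadj hx1 hx2 hy2 hy1
    have hx'A : x' ∈ A := by
      rcases hP1supp x' hx1 with h | h | h
      · exact h
      · exact absurd (h ▸ P2.start_mem_support) hx2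
      · exact absurd (h ▸ P2.end_mem_support) hx2
    have hy'B : y' ∈ B := by
      rcases hP2supp y' hy2 with h | h | h
      · exact h
      · exact absurd (h ▸ P1.start_mem_support) hy1
      · exact absurd (h ▸ P1.end_mem_support) hy1
    exact hAB x' hx'A y' hy'B hadj
  rcases hmem x hxs with hx1 | hx2 <;> rcases hmem y hys with hy1 | hy2
  · exact con1 hx1 hy1
  · by_cases hyP1 : y ∈ P1.support
    · exact con1 hx1 hyP1
    · by_cases hxP2 : x ∈ P2.support
      · exact con2 hxP2 hy2
      · exact mixed x y hxy hx1 hxP2 hy2 hyP1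
  · by_cases hxP1 : x ∈ P1.support
    · exact con1 hxP1 hy1
    · by_cases hyP2 : y ∈ P2.support
      · exact con2 hx2 hyP2
      · exact mixed y x hxy.symm hy1 hyP2 hx2 hxP1
  · exact con2 hx2 hy2

lemma sep_clique (hch : G.IsChordal) {W S : Set V} {a b : V} (hSW : S ⊆ W)
    (ha : a ∈ W \ S) (hb : b ∈ W \ S)
    (hsep : ¬ Reach G (W \ S) a b)
    (hmin : ∀ u ∈ S, Reach G (W \ (S \ {u})) a b) :
    ∀ u ∈ S, ∀ v ∈ S, u ≠ v → G.Adj u v := by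
  intro u hu v hv huv
  by_contra hnadj
  set A := {z | z ∈ W \ S ∧ Reach G (W \ S) a z} with hAdef
  set B := {z | z ∈ W \ S ∧ Reach G (W \ S) b z} with hBdef
  have hdisj : ∀ z, z ∈ A → z ∈ B → False := fun z hzA hzB =>
    hsep (reach_trans hzA.2 (reach_symm hzB.2))
  have hABedge : ∀ x ∈ A, ∀ y ∈ B, ¬ G.Adj x y := fun x hx y hy hadj =>
    hdisj y ⟨hy.1, reach_adj hx.2 hadj hy.1⟩ hy
  have nbr : ∀ s ∈ S, (∃ x, G.Adj s x ∧ x ∈ A) ∧ (∃ x, G.Adj s x ∧ x ∈ B) := by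
    intro s hs
    obtain ⟨w, hw⟩ := hmin s hs
    have hsupp : ∀ z ∈ w.support, z ∈ (W \ S) ∨ z = s := by
      intro z hz
      rcases eq_or_ne z s with rfl | hzs
      · exact Or.inr rfl
      · obtain ⟨h1, h2⟩ := hw z hz
        exact Or.inl ⟨h1, fun hzS => h2 ⟨hzS, hzs⟩⟩
    have hsmem : s ∈ w.support := by
      by_contra hns
      exact hsep ⟨w, fun z hz => (hsupp z hz).resolve_right fun h => hns (h ▸ hz)⟩
    constructor
    · obtain ⟨x, hadj, hxT, hreach⟩ := exists_nbr w hsupp hsmem fun h => ha.2 (h ▸ hs)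
      exact ⟨x, hadj, ⟨hxT, hreach⟩⟩
    · have hsmem' : s ∈ w.reverse.support := by
        rw [Walk.support_reverse, List.mem_reverse]; exact hsmem
      obtain ⟨x, hadj, hxT, hreach⟩ := exists_nbr w.reverse
        (fun z hz => hsupp z (by rwa [Walk.support_reverse, List.mem_reverse] at hz))
        hsmem' fun h => hb.2 (h ▸ hs)
      exact ⟨x, hadj, ⟨hxT, hreach⟩⟩
  have mkwalk : ∀ (c : V) (C : Set V), C = {z | z ∈ W \ S ∧ Reach G (W \ S) c z} →
      (∃ x, G.Adj u x ∧ x ∈ C) → (∃ x, G.Adj v x ∧ x ∈ C) →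
      ∃ w : G.Walk u v, ∀ z ∈ w.support, z ∈ C ∨ z = u ∨ z = v := by
    rintro c C rfl ⟨x, hux, hxC⟩ ⟨y, hvy, hyC⟩
    obtain ⟨w1, hw1⟩ := hxC.2
    obtain ⟨w2, hw2⟩ := hyC.2
    have hmA : ∀ z ∈ (w1.reverse.append w2).support, z ∈ {z | z ∈ W \ S ∧ Reach G (W \ S) c z} := by
      intro z hz
      rcases (Walk.mem_support_append_iff _ _).1 hz with h | h
      · rw [Walk.support_reverse, List.mem_reverse] at h
        exact ⟨hw1 z h, reach_of_mem_support w1 hw1 h⟩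
      · exact ⟨hw2 z h, reach_of_mem_support w2 hw2 h⟩
    refine ⟨Walk.cons hux ((w1.reverse.append w2).append (Walk.cons hvy.symm Walk.nil)), ?_⟩
    intro z hz
    rw [Walk.support_cons, List.mem_cons] at hz
    rcases hz with rfl | hz
    · exact Or.inr (Or.inl rfl)
    rcases (Walk.mem_support_append_iff _ _).1 hz with h | h
    · exact Or.inl (hmA z h)
    · simp only [Walk.support_cons, Walk.support_nil, List.mem_cons, List.mem_singleton] at h
      rcases h with rfl | h
      · exact Or.inl (hmA z (w1.reverse.append w2).end_mem_support)
      · rcases h with rfl | h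
        · exact Or.inr (Or.inr rfl)
        · exact absurd h List.not_mem_nil
  have hwA := mkwalk a A hAdef (nbr u hu).1 (nbr v hv).1
  have hwB := mkwalk b B hBdef (nbr u hu).2 (nbr v hv).2
  exact no_chordless hch A B u v hdisj huv hnadj hABedge hwA hwB

theorem rel_main (hch : G.IsChordal) :
    ∀ n : ℕ, ∀ W : Set V, W.Finite → W.ncard ≤ n →
    (∀ x ∈ W, ∀ y ∈ W, x ≠ y → G.Adj x y) ∨
    ∃ x ∈ W, ∃ y ∈ W, x ≠ y ∧ ¬G.Adj x y ∧
      (∀ p ∈ W, ∀ q ∈ W, G.Adj x p → G.Adj x q → p ≠ q → G.Adj p q) ∧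
      (∀ p ∈ W, ∀ q ∈ W, G.Adj y p → G.Adj y q → p ≠ q → G.Adj p q) := by
  intro n
  induction n with
  | zero =>
    intro W hWfin hW
    left
    rw [Nat.le_zero] at hW
    rw [(Set.ncard_eq_zero hWfin).1 hW]
    intro x hx
    exact absurd hx (Set.notMem_empty x)
  | succ n IH =>
    intro W hWfin hW
    by_cases hcomp : ∀ x ∈ W, ∀ y ∈ W, x ≠ y → G.Adj x y
    · exact Or.inl hcomp
    right
    push_neg at hcomp
    obtain ⟨a, haW, b, hbW, hab, hnadj⟩ := hcomp
    have hQ : ∃ m, ∃ S : Set V, (S ⊆ W ∧ a ∉ S ∧ b ∉ S ∧ ¬ Reach G (W \ S) a b) ∧ S.ncard = m := by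
      refine ⟨_, W \ {a, b}, ⟨Set.diff_subset, by simp, by simp [hab.symm], ?_⟩, rfl⟩
      rintro ⟨w, hw⟩
      refine hnadj (adj_of_walk_support_pair w ?_ hab)
      intro z hz
      obtain ⟨h1, h2⟩ := hw z hz
      by_contra hc
      push_neg at hc
      exact h2 ⟨h1, by simp [hc.1, hc.2]⟩
    obtain ⟨S, ⟨hSW, haS, hbS, hsep⟩, hScard⟩ := Nat.find_spec hQ
    have hmin : ∀ u ∈ S, Reach G (W \ (S \ {u})) a b := by
      intro u hu
      by_contra hno
      have hlt : (S \ {u}).ncard < Nat.find hQ := by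
        rw [← hScard]
        exact Set.ncard_diff_singleton_lt_of_mem hu (hWfin.subset hSW)
      exact Nat.find_min hQ hlt ⟨S \ {u}, ⟨Set.diff_subset.trans hSW,
        fun h => haS h.1, fun h => hbS h.1, hno⟩, rfl⟩
    have hclique := sep_clique hch hSW ⟨haW, haS⟩ ⟨hbW, hbS⟩ hsep hmin
    have side : ∀ c d : V, c ∈ W \ S → d ∈ W \ S → ¬ Reach G (W \ S) c d →
        ∃ x, (x ∈ W \ S ∧ Reach G (W \ S) c x) ∧
          ∀ p ∈ W, ∀ q ∈ W, G.Adj x p → G.Adj x q → p ≠ q → G.Adj p q := by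
      intro c d hc hd hsep'
      set A := {z | z ∈ W \ S ∧ Reach G (W \ S) c z} with hAdef
      set W' := A ∪ S with hW'def
      have hW'W : W' ⊆ W := by
        rintro z (hz | hz)
        exacts [hz.1.1, hSW hz]
      have hcA : c ∈ A := ⟨hc, reach_refl hc⟩
      have hdW' : d ∉ W' := by
        rintro (hz | hz)
        exacts [hsep' hz.2, hd.2 hz]
      have hcard : W'.ncard ≤ n := by
        have : W'.ncard < W.ncard :=
          Set.ncard_lt_ncard ⟨hW'W, fun hsub => hdW' (hsub hd.1)⟩ hWfin
        omega
      have hcl : ∀ x ∈ A, ∀ y, G.Adj x y → y ∈ W → y ∈ W' := by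
        intro x hx y hadj hyW
        by_cases hyS : y ∈ S
        · exact Or.inr hyS
        · exact Or.inl ⟨⟨hyW, hyS⟩, reach_adj hx.2 hadj ⟨hyW, hyS⟩⟩
      rcases IH W' (hWfin.subset hW'W) hcard with hfull | ⟨x, hx, y, hy, hxy, hxyn, hsx, hsy⟩
      · refine ⟨c, ⟨hc, reach_refl hc⟩, ?_⟩
        intro p hp q hq hadjp hadjq hpq
        exact hfull p (hcl c hcA p hadjp hp) q (hcl c hcA q hadjq hq) hpq
      · have hone : x ∈ A ∨ y ∈ A := by
          by_contra hcon
          push_neg at hcon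
          have hxS : x ∈ S := by
            rcases hx with h | h
            exacts [absurd h hcon.1, h]
          have hyS : y ∈ S := by
            rcases hy with h | h
            exacts [absurd h hcon.2, h]
          exact hxyn (hclique x hxS y hyS hxy)
        rcases hone with hxA | hyA
        · refine ⟨x, ⟨hxA.1, hxA.2⟩, ?_⟩
          intro p hp q hq hadjp hadjq hpq
          exact hsx p (hcl x hxA p hadjp hp) q (hcl x hxA q hadjq hq) hadjp hadjq hpq
        · refine ⟨y, ⟨hyA.1, hyA.2⟩, ?_⟩
          intro p hp q hq hadjp hadjq hpq
          exact hsy p (hcl y hyA p hadjp hp) q (hcl y hyA q hadjq hq) hadjp hadjq hpq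
    obtain ⟨x, ⟨hxWS, hxr⟩, hxs⟩ := side a b ⟨haW, haS⟩ ⟨hbW, hbS⟩ hsep
    obtain ⟨y, ⟨hyWS, hyr⟩, hys⟩ := side b a ⟨hbW, hbS⟩ ⟨haW, haS⟩ fun h => hsep (reach_symm h)
    have hxyne : x ≠ y := by
      rintro rfl
      exact hsep (reach_trans hxr (reach_symm hyr))
    have hxyna : ¬ G.Adj x y := fun hadj =>
      hsep (reach_trans (reach_adj hxr hadj hyWS) (reach_symm hyr))
    exact ⟨x, hxWS.1, y, hyWS.1, hxyne, hxyna, hxs, hys⟩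

end ChordalAux

/-- Every noncomplete chordal graph has two nonadjacent simplicial vertices. -/
theorem stmt_0 {V : Type*} [Fintype V] (G : SimpleGraph V)
    (hchordal : G.IsChordal) (hnc : G ≠ ⊤) :
    ∃ x y : V, x ≠ y ∧ ¬ G.Adj x y ∧ G.IsSimplicial x ∧ G.IsSimplicial y := by
  rcases ChordalAux.rel_main hchordal (Set.univ : Set V).ncard Set.univ Set.finite_univ le_rfl
    with hfull | ⟨x, -, y, -, hxy, hnadj, hsx, hsy⟩
  · exfalso
    apply hnc
    ext u w
    simp only [SimpleGraph.top_adj]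
    constructor
    · exact fun h => h.ne
    · exact fun h => hfull u (Set.mem_univ u) w (Set.mem_univ w) h
  · refine ⟨x, y, hxy, hnadj, ?_, ?_⟩
    · intro p hp q hq hpq
      exact hsx p (Set.mem_univ p) q (Set.mem_univ q) hp hq hpq
    · intro p hp q hq hpq
      exact hsy p (Set.mem_univ p) q (Set.mem_univ q) hp hq hpq
end

section
/- Let G be a chordal graph and let x be a vertex of G that is nondominating, i.e., x is not adjacent to every other vertex of G. Then there exists a vertex y of G such that y is not adjacent to x, y ≠ x, and the graph obtained from G by adding the edge xy is also chordal. -/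
open scoped Classical

namespace ChordalAux
open SimpleGraph Walk
variable {V : Type*}


/-- A walk is "induced" if every adjacency between support vertices is an edge of it. -/
def WalkInd (Γ : SimpleGraph V) {u v : V} (w : Γ.Walk u v) : Prop :=
  ∀ a b : V, Γ.Adj a b → a ∈ w.support → b ∈ w.support → s(a, b) ∈ w.edges

/-- An edge at the start of a path determines the decomposition. -/
lemma edge_start_of_isPath {Γ : SimpleGraph V} {u v c : V} (p : Γ.Walk u v)
    (hp : p.IsPath) (he : s(u, c) ∈ p.edges) :
    ∃ (h : Γ.Adj u c) (q : Γ.Walk c v), p = Walk.cons h q := by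
  cases p with
  | nil => simp at he
  | cons h q =>
    rename_i b
    rw [Walk.edges_cons, List.mem_cons] at he
    rcases he with he | he
    · rw [Sym2.eq_iff] at he
      rcases he with ⟨-, rfl⟩ | ⟨rfl, rfl⟩
      · exact ⟨h, q, rfl⟩
      · exact absurd rfl h.ne
    · exfalso
      have hu : u ∈ q.support := q.fst_mem_support_of_mem_edges he
      rw [Walk.cons_isPath_iff] at hp
      exact hp.2 hu

/-- A walk from outside a set to inside it crosses via some dart. -/
lemma exists_crossing_dart {Γ : SimpleGraph V} (P : Set V) :
    ∀ {u v : V} (w : Γ.Walk u v), u ∉ P → v ∈ P →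
      ∃ d ∈ w.darts, d.fst ∉ P ∧ d.snd ∈ P := by
  intro u v w
  induction w with
  | nil => intro hu hv; exact absurd hv hu
  | cons h q ih =>
    intro hu hv
    rename_i a b c
    by_cases hb : b ∈ P
    · exact ⟨⟨(a, b), h⟩, by simp, hu, hb⟩
    · obtain ⟨d, hd, hd1, hd2⟩ := ih hb hv
      exact ⟨d, by simp [hd], hd1, hd2⟩






/-- core: if w₀ is length-minimal among walks with support in A and decomposes with a middle
segment from a to b with G.Adj a b, then s(a,b) is an edge of w₀. -/
lemma core_min {Γ : SimpleGraph V} {A : Set V} {s y a b : V}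
    {w₀ : Γ.Walk s y} (hA : ∀ v ∈ w₀.support, v ∈ A)
    (hmin : ∀ w : Γ.Walk s y, (∀ v ∈ w.support, v ∈ A) → w₀.length ≤ w.length)
    (hab : Γ.Adj a b) (p : Γ.Walk s a) (q : Γ.Walk a b) (r : Γ.Walk b y)
    (hw : w₀ = (p.append q).append r) : s(a, b) ∈ w₀.edges := by
  have hsub : ∀ v ∈ (p.append (Walk.cons hab r)).support, v ∈ A := by
    intro v hv
    rw [Walk.mem_support_append_iff] at hv
    apply hA
    rw [hw, Walk.mem_support_append_iff, Walk.mem_support_append_iff]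
    rcases hv with hv | hv
    · exact Or.inl (Or.inl hv)
    · rw [Walk.support_cons, List.mem_cons] at hv
      rcases hv with rfl | hv
      · exact Or.inl (Or.inr (Walk.start_mem_support q))
      · exact Or.inr hv
  have hlen := hmin _ hsub
  rw [hw, Walk.length_append, Walk.length_append, Walk.length_append,
    Walk.length_cons] at hlen
  have hq1 : q.length ≤ 1 := by omega
  cases q with
  | nil => exact absurd rfl hab.ne
  | cons h' q' =>
    rw [Walk.length_cons] at hq1
    have hb0 : q'.length = 0 := by omega
    have heq := Walk.eq_of_length_eq_zero (p := q') hb0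
    subst heq
    rw [hw]
    rw [Walk.edges_append, Walk.edges_append, List.mem_append, List.mem_append]
    exact Or.inl (Or.inr (by simp))

lemma ind_of_min {Γ : SimpleGraph V} {A : Set V} {s y : V}
    {w₀ : Γ.Walk s y} (hA : ∀ v ∈ w₀.support, v ∈ A)
    (hmin : ∀ w : Γ.Walk s y, (∀ v ∈ w.support, v ∈ A) → w₀.length ≤ w.length) :
    WalkInd Γ w₀ := by
  classical
  intro a b hab ha hb
  set t := w₀.takeUntil a ha with ht
  set d := w₀.dropUntil a ha with hd
  have hspec : t.append d = w₀ := w₀.take_spec ha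
  by_cases hbd : b ∈ d.support
  · have hsp2 : (d.takeUntil b hbd).append (d.dropUntil b hbd) = d := d.take_spec hbd
    apply core_min hA hmin hab t (d.takeUntil b hbd) (d.dropUntil b hbd)
    rw [← Walk.append_assoc, hsp2, hspec]
  · have hbt : b ∈ t.support := by
      have := hb
      rw [← hspec, Walk.mem_support_append_iff] at this
      tauto
    have hsp2 : (t.takeUntil b hbt).append (t.dropUntil b hbt) = t := t.take_spec hbt
    have := core_min hA hmin hab.symm (t.takeUntil b hbt) (t.dropUntil b hbt) d
      (by rw [hsp2, hspec])
    rwa [Sym2.eq_swap] at this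

lemma exists_min_walk {Γ : SimpleGraph V} (A : Set V) {s y : V}
    (h : ∃ w : Γ.Walk s y, ∀ v ∈ w.support, v ∈ A) :
    ∃ w₀ : Γ.Walk s y, w₀.IsPath ∧ (∀ v ∈ w₀.support, v ∈ A) ∧
      (∀ w : Γ.Walk s y, (∀ v ∈ w.support, v ∈ A) → w₀.length ≤ w.length) ∧
      WalkInd Γ w₀ := by
  classical
  have hP : ∃ n : ℕ, ∃ w : Γ.Walk s y, (∀ v ∈ w.support, v ∈ A) ∧ w.length = n := by
    obtain ⟨w, hw⟩ := h
    exact ⟨w.length, w, hw, rfl⟩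
  obtain ⟨w₁, hw₁A, hw₁len⟩ := Nat.find_spec hP
  have hmin1 : ∀ w : Γ.Walk s y, (∀ v ∈ w.support, v ∈ A) → w₁.length ≤ w.length := by
    intro w hwA
    rw [hw₁len]
    exact Nat.find_min' hP ⟨w, hwA, rfl⟩
  refine ⟨w₁.bypass, Walk.bypass_isPath _, fun v hv => hw₁A v (w₁.support_bypass_subset hv),
    ?_, ?_⟩
  · intro w hwA
    exact le_trans (Walk.length_bypass_le _) (hmin1 w hwA)
  · apply ind_of_min (fun v hv => hw₁A v (w₁.support_bypass_subset hv))
    intro w hwA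
    exact le_trans (Walk.length_bypass_le _) (hmin1 w hwA)






/-- For a path, the prefix up to b of an induced walk is induced. -/
lemma walkInd_takeUntil [DecidableEq V] {Γ : SimpleGraph V} {s y b : V} {w : Γ.Walk s y}
    (hw : w.IsPath) (hind : WalkInd Γ w) (hb : b ∈ w.support) :
    WalkInd Γ (w.takeUntil b hb) := by
  intro a c hac ha hc
  have hmem : s(a, c) ∈ w.edges :=
    hind a c hac (w.support_takeUntil_subset hb ha) (w.support_takeUntil_subset hb hc)
  -- the intersection of takeUntil and dropUntil supports is {b}
  have hdisj : ∀ v, v ∈ (w.takeUntil b hb).support → v ∈ (w.dropUntil b hb).support → v = b := by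
    intro v hv1 hv2
    by_contra hne
    have hnodup : w.support.Nodup := hw.support_nodup
    rw [← w.take_spec hb, Walk.support_append] at hnodup
    have hdisj2 := List.disjoint_of_nodup_append hnodup
    have : v ∈ (w.dropUntil b hb).support.tail := by
      have heq := Walk.support_eq_cons (w.dropUntil b hb)
      rw [heq, List.mem_cons] at hv2
      rcases hv2 with h1 | h1
      · exact absurd h1 hne
      · exact h1
    exact hdisj2 hv1 this
  have hsplit : s(a, c) ∈ (w.takeUntil b hb).edges ∨ s(a, c) ∈ (w.dropUntil b hb).edges := by
    have := hmem
    rw [← w.take_spec hb, Walk.edges_append, List.mem_append] at this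
    exact this
  rcases hsplit with h | h
  · exact h
  · exfalso
    have ha' : a ∈ (w.dropUntil b hb).support := Walk.fst_mem_support_of_mem_edges _ h
    have hc' : c ∈ (w.dropUntil b hb).support := Walk.snd_mem_support_of_mem_edges _ h
    have h1 := hdisj a ha ha'
    have h2 := hdisj c hc hc'
    exact hac.ne (h1.trans h2.symm)

lemma takeUntil_cons_of_ne [DecidableEq V] {Γ : SimpleGraph V} {s u y b : V}
    (h : Γ.Adj s u) (q : Γ.Walk u y) (hb : b ∈ (Walk.cons h q).support) (hne : s ≠ b)
    (hbq : b ∈ q.support) :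
    (Walk.cons h q).takeUntil b hb = Walk.cons h (q.takeUntil b hbq) := by
  simp only [Walk.takeUntil, hne, dite_false]

lemma length_takeUntil_lt [DecidableEq V] {Γ : SimpleGraph V} {s y b : V} (w : Γ.Walk s y)
    (hb : b ∈ w.support) (hne : b ≠ y) :
    (w.takeUntil b hb).length < w.length := by
  have hspec := w.take_spec hb
  have hlen := congrArg Walk.length hspec
  rw [Walk.length_append] at hlen
  have : (w.dropUntil b hb).length ≠ 0 := by
    intro h0
    exact hne (Walk.eq_of_length_eq_zero h0)
  omega

lemma isPath_concat {Γ : SimpleGraph V} {u v p' : V} (w : Γ.Walk u v) (hw : w.IsPath)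
    (h : Γ.Adj v p') (hp : p' ∉ w.support) : (w.concat h).IsPath := by
  rw [← Walk.isPath_reverse_iff, Walk.reverse_concat, Walk.cons_isPath_iff]
  exact ⟨hw.reverse, by rwa [Walk.support_reverse, List.mem_reverse]⟩








/-- Sandwiching an induced path between two edges to an apex vertex yields, by chordality,
a neighbor of the apex strictly inside the path. -/
lemma sandwich_chord {Γ : SimpleGraph V} (hch : Γ.IsChordal) {t0 s' y' : V}
    (ht1 : Γ.Adj t0 s') (ht2 : Γ.Adj t0 y') (hne : s' ≠ y') {w : Γ.Walk s' y'}
    (hw : w.IsPath) (htw : t0 ∉ w.support) (hlen : 2 ≤ w.length)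
    (hind : WalkInd Γ w) :
    ∃ b ∈ w.support, Γ.Adj t0 b ∧ b ≠ s' ∧ b ≠ y' := by
  have hpath : (w.concat ht2.symm).IsPath := isPath_concat w hw ht2.symm htw
  have hne2 : s(t0, s') ∉ (w.concat ht2.symm).edges := by
    rw [Walk.edges_concat, List.concat_eq_append, List.mem_append]
    rintro (h | h)
    · exact htw (Walk.fst_mem_support_of_mem_edges _ h)
    · simp only [List.mem_singleton, Sym2.eq_iff] at h
      rcases h with ⟨rfl, -⟩ | ⟨-, rfl⟩
      · exact ht2.ne rfl
      · exact hne rfl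
  have hcyc : (Walk.cons ht1 (w.concat ht2.symm)).IsCycle := by
    rw [Walk.cons_isCycle_iff]
    exact ⟨hpath, hne2⟩
  have hlength : 3 < (Walk.cons ht1 (w.concat ht2.symm)).length := by
    rw [Walk.length_cons, Walk.length_concat]; omega
  obtain ⟨a, b, hab, ha, hb, hnotin⟩ := hch _ hcyc hlength
  have hsupp : ∀ z, z ∈ (Walk.cons ht1 (w.concat ht2.symm)).support →
      z = t0 ∨ z ∈ w.support := by
    intro z hz
    rw [Walk.support_cons, List.mem_cons, Walk.support_concat,
      List.mem_append, List.mem_singleton] at hz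
    tauto
  have hedges : ∀ e, e ∈ w.edges → e ∈ (Walk.cons ht1 (w.concat ht2.symm)).edges := by
    intro e he
    rw [Walk.edges_cons, List.mem_cons, Walk.edges_concat, List.concat_eq_append,
      List.mem_append]
    tauto
  have hts' : s(t0, s') ∈ (Walk.cons ht1 (w.concat ht2.symm)).edges := by
    rw [Walk.edges_cons]; exact List.mem_cons_self
  have hty' : s(y', t0) ∈ (Walk.cons ht1 (w.concat ht2.symm)).edges := by
    rw [Walk.edges_cons, List.mem_cons, Walk.edges_concat, List.concat_eq_append,
      List.mem_append, List.mem_singleton]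
    tauto
  rcases hsupp a ha with rfl | haw
  · -- a = t0
    rcases hsupp b hb with rfl | hbw
    · exact absurd rfl hab.ne
    · refine ⟨b, hbw, hab, ?_, ?_⟩
      · rintro rfl; exact hnotin hts'
      · rintro rfl; apply hnotin; rw [Sym2.eq_swap]; exact hty'
  · rcases hsupp b hb with rfl | hbw
    · refine ⟨a, haw, hab.symm, ?_, ?_⟩
      · rintro rfl; apply hnotin; rw [Sym2.eq_swap]; exact hts'
      · rintro rfl; exact hnotin hty'
    · exact absurd (hedges _ (hind a b hab haw hbw)) hnotin




/-- Decompose a cycle through the edge s(x,y), based at x, into the edge plus a path. -/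
lemma cycle_decomp {Γ : SimpleGraph V} {x y : V} (w : Γ.Walk x x) (hc : w.IsCycle)
    (he : s(x, y) ∈ w.edges) :
    ∃ p : Γ.Walk x y, p.IsPath ∧ s(x, y) ∉ p.edges ∧
      (∀ z, z ∈ p.support ↔ z ∈ w.support) ∧
      (∀ e, e ∈ w.edges ↔ e = s(x, y) ∨ e ∈ p.edges) ∧
      w.length = p.length + 1 := by
  obtain ⟨b, hb, q, rfl⟩ := Walk.not_nil_iff.mp hc.not_nil
  obtain ⟨hqpath, hqe⟩ := (Walk.cons_isCycle_iff q hb).mp hc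
  rw [Walk.edges_cons, List.mem_cons] at he
  by_cases hcase : s(x, y) = s(x, b)
  · -- first edge is s(x,y), so y = b
    have hyb : y = b := by
      rw [Sym2.eq_iff] at hcase
      rcases hcase with ⟨-, h⟩ | ⟨h1, h2⟩
      · exact h
      · exact absurd h1 hb.ne
    subst hyb
    refine ⟨q.reverse, hqpath.reverse, ?_, ?_, ?_, ?_⟩
    · rw [Walk.edges_reverse, List.mem_reverse]
      rwa [hcase]
    · intro z
      rw [Walk.support_reverse, List.mem_reverse, Walk.support_cons, List.mem_cons]
      constructor
      · exact Or.inr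
      · rintro (rfl | h)
        · exact q.end_mem_support
        · exact h
    · intro e
      rw [Walk.edges_cons, List.mem_cons, Walk.edges_reverse, List.mem_reverse, hcase]
    · rw [Walk.length_cons, Walk.length_reverse]
  · -- edge s(x,y) is inside q
    have he' : s(x, y) ∈ q.edges := by tauto
    have hqnn : ¬ q.reverse.Nil := Walk.not_nil_of_ne (fun h => hb.ne h)
    obtain ⟨c, hc', r, hqr⟩ := Walk.not_nil_iff.mp hqnn
    have hqrev : s(x, y) ∈ q.reverse.edges := by rwa [Walk.edges_reverse, List.mem_reverse]
    have hqrpath : q.reverse.IsPath := hqpath.reverse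
    have hyc : y = c := by
      rw [hqr, Walk.edges_cons, List.mem_cons] at hqrev
      rcases hqrev with h | h
      · rw [Sym2.eq_iff] at h
        rcases h with ⟨-, h⟩ | ⟨h1, -⟩
        · exact h
        · exact absurd h1 hc'.ne
      · exfalso
        have hxp := hqrpath
        rw [hqr, Walk.cons_isPath_iff] at hxp
        exact hxp.2 (Walk.fst_mem_support_of_mem_edges _ h)
    subst hyc
    -- r : Walk y b
    have hxp := hqrpath
    rw [hqr, Walk.cons_isPath_iff] at hxp
    obtain ⟨hrpath, hxr⟩ := hxp
    have hxyr : s(x, y) ∉ r.edges := by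
      have hnodup : q.reverse.edges.Nodup := hqrpath.isTrail.edges_nodup
      rw [hqr, Walk.edges_cons] at hnodup
      exact (List.nodup_cons.mp hnodup).1
    have hmemq : ∀ (z : V), z ∈ q.support ↔ z = x ∨ z ∈ r.support := by
      intro z
      rw [← List.mem_reverse, ← Walk.support_reverse, hqr, Walk.support_cons, List.mem_cons]
    have hedq : ∀ (e : Sym2 V), e ∈ q.edges ↔ e = s(x, y) ∨ e ∈ r.edges := by
      intro e
      rw [← List.mem_reverse, ← Walk.edges_reverse, hqr, Walk.edges_cons, List.mem_cons]
    refine ⟨Walk.cons hb r.reverse, ?_, ?_, ?_, ?_, ?_⟩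
    · rw [Walk.cons_isPath_iff]
      refine ⟨hrpath.reverse, ?_⟩
      rwa [Walk.support_reverse, List.mem_reverse]
    · rw [Walk.edges_cons, List.mem_cons]
      rintro (h | h)
      · exact hcase h
      · rw [Walk.edges_reverse, List.mem_reverse] at h
        exact hxyr h
    · intro z
      rw [Walk.support_cons, List.mem_cons, Walk.support_cons, List.mem_cons,
        Walk.support_reverse, List.mem_reverse, hmemq z]
      tauto
    · intro e
      rw [Walk.edges_cons, List.mem_cons, Walk.edges_cons, List.mem_cons,
        Walk.edges_reverse, List.mem_reverse, hedq e]
      tauto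
    · have h1 : q.length = r.length + 1 := by
        rw [← Walk.length_reverse q, hqr, Walk.length_cons]
      rw [Walk.length_cons, Walk.length_cons, Walk.length_reverse, h1]

/-- The descent lemma: if t is adjacent to an endpoint y' of an induced path w from s'
with interior in C, and t is adjacent to s' but not in C, then t is adjacent to the
second vertex of w. -/
lemma descent {Γ : SimpleGraph V} (hch : Γ.IsChordal) (C : Set V) {t s' : V}
    (htC : t ∉ C) (htsne : t ≠ s') (hts : Γ.Adj t s') :
    ∀ n : ℕ, ∀ {y' : V} (w : Γ.Walk s' y'), w.length = n → w.IsPath → WalkInd Γ w →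
      (∀ v ∈ w.support, v = s' ∨ v ∈ C) → Γ.Adj t y' →
      ∀ {u1 : V} (h : Γ.Adj s' u1) (q : Γ.Walk u1 y'), w = Walk.cons h q → Γ.Adj t u1 := by
  intro n
  induction n using Nat.strong_induction_on with
  | _ n IH =>
    intro y' w hn hpath hind hsupp hty u1 h q hw
    subst hw
    rw [Walk.length_cons] at hn
    by_cases hq0 : q.length = 0
    · have : u1 = y' := Walk.eq_of_length_eq_zero hq0
      subst this
      exact hty
    · -- length at least 2
      have hlen2 : 2 ≤ (Walk.cons h q).length := by rw [Walk.length_cons]; omega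
      have hsy : s' ≠ y' := by
        rintro rfl
        have := Walk.isPath_iff_eq_nil |>.mp hpath
        simp [this] at hlen2
      have htw : t ∉ (Walk.cons h q).support := by
        intro hmem
        rcases hsupp t hmem with rfl | hC
        · exact htsne rfl
        · exact htC hC
      obtain ⟨b, hbw, htb, hbs, hby⟩ :=
        sandwich_chord hch hts hty hsy hpath htw hlen2 hind
      have hbq : b ∈ q.support := by
        rw [Walk.support_cons, List.mem_cons] at hbw
        rcases hbw with rfl | h'
        · exact absurd rfl hbs
        · exact h'
      have hbw' : b ∈ (Walk.cons h q).support := by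
        rw [Walk.support_cons, List.mem_cons]; exact Or.inr hbq
      have hTU : (Walk.cons h q).takeUntil b hbw' = Walk.cons h (q.takeUntil b hbq) :=
        takeUntil_cons_of_ne h q hbw' (fun he => hbs he.symm) hbq
      have hlt : ((Walk.cons h q).takeUntil b hbw').length < n := by
        have h2 := length_takeUntil_lt (Walk.cons h q) hbw' hby
        rw [Walk.length_cons] at h2
        omega
      exact IH _ hlt ((Walk.cons h q).takeUntil b hbw')
        rfl (hpath.takeUntil hbw') (walkInd_takeUntil hpath hind hbw')
        (fun v hv => hsupp v ((Walk.cons h q).support_takeUntil_subset hbw' hv))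
        htb h (q.takeUntil b hbq) hTU



end ChordalAux
section
open SimpleGraph Walk ChordalAux
variable {V : Type*}

lemma exists_good_vertex [Fintype V] {G : SimpleGraph V} (hch : G.IsChordal) (x : V)
    (C S : Set V) (hCne : C.Nonempty) (hxC : x ∉ C)
    (hCadj : ∀ c ∈ C, ∀ b, G.Adj c b → b ∈ C ∨ b ∈ S)
    (hCconn : ∀ c ∈ C, ∀ c' ∈ C, ∃ w : G.Walk c c', ∀ v ∈ w.support, v ∈ C)
    (hCx : ∀ c ∈ C, ¬ G.Adj x c)
    (hS : ∀ s ∈ S, G.Adj x s ∧ ∃ c ∈ C, G.Adj s c) :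
    ∃ y ∈ C, ∀ s ∈ S, G.Adj s y := by
  classical
  have hSC : ∀ s ∈ S, s ∉ C := fun s hs hsC => hCx s hsC (hS s hs).1
  -- S is a clique
  have hclique : ∀ s ∈ S, ∀ t ∈ S, s ≠ t → G.Adj s t := by
    intro s hs t ht hst
    obtain ⟨hxs, c, hc, hsc⟩ := hS s hs
    obtain ⟨hxt, c', hc', htc⟩ := hS t ht
    obtain ⟨wcc, hwcc⟩ := hCconn c hc c' hc'
    have hex : ∃ w : G.Walk s t, ∀ v ∈ w.support, v ∈ insert s (insert t C) := by
      refine ⟨Walk.cons hsc (wcc.concat htc.symm), ?_⟩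
      intro v hv
      rw [Walk.support_cons, List.mem_cons] at hv
      rcases hv with rfl | hv
      · exact Set.mem_insert _ _
      · rw [Walk.support_concat, List.mem_append,
          List.mem_singleton] at hv
        rcases hv with hv | rfl
        · exact Set.mem_insert_of_mem _ (Set.mem_insert_of_mem _ (hwcc v hv))
        · exact Set.mem_insert_of_mem _ (Set.mem_insert _ _)
    obtain ⟨w₀, hw₀p, hw₀A, hw₀min, hw₀ind⟩ := exists_min_walk _ hex
    rcases Nat.lt_or_ge w₀.length 2 with hl | hl
    · -- length 0 impossible, length 1 gives adjacency
      cases w₀ with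
      | nil => exact absurd rfl hst
      | cons h' q' =>
        rw [Walk.length_cons] at hl
        have := Walk.eq_of_length_eq_zero (p := q') (by omega)
        subst this
        exact h'
    · exfalso
      have htw : x ∉ w₀.support := by
        intro hmem
        rcases hw₀A x hmem with rfl | hv
        · exact hxs.ne rfl
        · rcases hv with rfl | hv
          · exact hxt.ne rfl
          · exact hxC hv
      obtain ⟨b, hbsup, hxb, hbs, hbt⟩ :=
        sandwich_chord hch hxs hxt hst hw₀p htw hl hw₀ind
      rcases hw₀A b hbsup with rfl | hv
      · exact hbs rfl
      · rcases hv with rfl | hv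
        · exact hbt rfl
        · exact hCx b hv hxb
  -- choose y in C maximizing the number of its neighbors in S
  let F : V → Finset V := fun y => Finset.univ.filter (fun t => t ∈ S ∧ G.Adj t y)
  obtain ⟨z0, hz0⟩ := hCne
  have hCFne : (Finset.univ.filter (· ∈ C)).Nonempty :=
    ⟨z0, Finset.mem_filter.mpr ⟨Finset.mem_univ _, hz0⟩⟩
  obtain ⟨y, hyCF, hymax⟩ :=
    Finset.exists_max_image (Finset.univ.filter (· ∈ C)) (fun y => (F y).card) hCFne
  have hyC : y ∈ C := (Finset.mem_filter.mp hyCF).2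
  refine ⟨y, hyC, ?_⟩
  by_contra hcon
  push_neg at hcon
  obtain ⟨s, hs, hsy⟩ := hcon
  obtain ⟨hxs, c, hc, hsc⟩ := hS s hs
  have hsnC : s ∉ C := hSC s hs
  have hsyne : s ≠ y := by rintro rfl; exact hsnC hyC
  have hex : ∃ w : G.Walk s y, ∀ v ∈ w.support, v ∈ insert s C := by
    obtain ⟨wcy, hwcy⟩ := hCconn c hc y hyC
    refine ⟨Walk.cons hsc wcy, ?_⟩
    intro v hv
    rw [Walk.support_cons, List.mem_cons] at hv
    rcases hv with rfl | hv
    · exact Set.mem_insert _ _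
    · exact Set.mem_insert_of_mem _ (hwcy v hv)
  obtain ⟨w₀, hw₀p, hw₀A, hw₀min, hw₀ind⟩ := exists_min_walk _ hex
  have hl2 : 2 ≤ w₀.length := by
    rcases Nat.lt_or_ge w₀.length 2 with hl | hl
    · exfalso
      cases w₀ with
      | nil => exact hsyne rfl
      | cons h' q' =>
        rw [Walk.length_cons] at hl
        have := Walk.eq_of_length_eq_zero (p := q') (by omega)
        subst this
        exact hsy h'
    · exact hl
  have hnn : ¬ w₀.Nil := by rw [Walk.not_nil_iff_lt_length]; omega
  obtain ⟨u1, h1, q1, hw0⟩ := Walk.not_nil_iff.mp hnn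
  have hu1sup : u1 ∈ w₀.support := by
    rw [hw0, Walk.support_cons, List.mem_cons]
    exact Or.inr q1.start_mem_support
  have hu1C : u1 ∈ C := by
    rcases hw₀A u1 hu1sup with rfl | hv
    · exact absurd rfl h1.ne
    · exact hv
  have hsubset : F y ⊆ F u1 := by
    intro t ht
    rw [Finset.mem_filter] at ht ⊢
    obtain ⟨-, htS, hty⟩ := ht
    refine ⟨Finset.mem_univ _, htS, ?_⟩
    by_cases hts : t = s
    · subst hts; exact h1
    · have htC : t ∉ C := hSC t htS
      have hadjts : G.Adj t s := hclique t htS s hs hts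
      exact descent hch C htC hts hadjts w₀.length w₀ rfl hw₀p hw₀ind
        (fun v hv => (hw₀A v hv).imp id id) hty h1 q1 hw0
  have hstrict : F y ⊂ F u1 := by
    refine ⟨hsubset, fun hsub => ?_⟩
    have hsF : s ∈ F u1 := Finset.mem_filter.mpr ⟨Finset.mem_univ _, hs, h1⟩
    have := Finset.mem_filter.mp (hsub hsF)
    exact hsy this.2.2
  have hcard := Finset.card_lt_card hstrict
  have := hymax u1 (Finset.mem_filter.mpr ⟨Finset.mem_univ _, hu1C⟩)
  omega

end

/-- If `x` is a nondominating vertex of a chordal graph `G` (i.e. `x` is not adjacent to every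
other vertex), then there is a vertex `y` nonadjacent to `x`, `y ≠ x`, such that the graph
obtained from `G` by adding the edge `xy` is still chordal. -/
theorem stmt_1 {V : Type*} [Fintype V] (G : SimpleGraph V) (x : V)
    (hchordal : G.IsChordal) (hnd : ¬ ∀ z : V, z ≠ x → G.Adj x z) :
    ∃ y : V, y ≠ x ∧ ¬ G.Adj x y ∧
      (G ⊔ SimpleGraph.fromEdgeSet {s(x, y)}).IsChordal := by
  classical
  open SimpleGraph Walk ChordalAux in
  push_neg at hnd
  obtain ⟨z0, hz0ne, hz0adj⟩ := hnd
  set D : Set V := {z | z ≠ x ∧ ¬ G.Adj x z} with hD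
  let H : SimpleGraph V :=
    { Adj := fun a b => G.Adj a b ∧ a ∈ D ∧ b ∈ D
      symm := ⟨fun a b ⟨h, ha, hb⟩ => ⟨h.symm, hb, ha⟩⟩
      loopless := ⟨fun a ⟨h, _, _⟩ => G.loopless.irrefl a h⟩ }
  set C : Set V := {c | H.Reachable z0 c} with hC
  set S : Set V := {s | G.Adj x s ∧ ∃ c ∈ C, G.Adj s c} with hSdef
  have hz0D : z0 ∈ D := ⟨hz0ne, hz0adj⟩
  have hHD : ∀ (a b : V) (w : H.Walk a b), a ∈ D → b ∈ D := by
    intro a b w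
    induction w with
    | nil => exact id
    | cons h q ih => intro _; exact ih h.2.2
  have hCD : ∀ c ∈ C, c ∈ D := fun c hc => hc.elim fun w => hHD _ _ w hz0D
  have hCsupp : ∀ (a b : V) (w : H.Walk a b), a ∈ C → ∀ v ∈ w.support, v ∈ C := by
    intro a b w
    induction w with
    | nil =>
      intro ha v hv
      rw [SimpleGraph.Walk.support_nil, List.mem_singleton] at hv
      subst hv; exact ha
    | cons h q ih =>
      intro ha v hv
      rw [SimpleGraph.Walk.support_cons, List.mem_cons] at hv
      rcases hv with rfl | hv
      · exact ha
      · exact ih (ha.trans h.reachable) v hv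
  have hxD : x ∉ D := fun h => h.1 rfl
  have hxC : x ∉ C := fun h => hxD (hCD x h)
  have hz0C : z0 ∈ C := SimpleGraph.Reachable.refl z0
  have hCadj : ∀ c ∈ C, ∀ b, G.Adj c b → b ∈ C ∨ b ∈ S := by
    intro c hc b hcb
    by_cases hbD : b ∈ D
    · left
      exact hc.trans (SimpleGraph.Adj.reachable (G := H) ⟨hcb, hCD c hc, hbD⟩)
    · right
      have hbx : b ≠ x := by rintro rfl; exact (hCD c hc).2 hcb.symm
      have hxb : G.Adj x b := by
        by_contra hnadj; exact hbD ⟨hbx, hnadj⟩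
      exact ⟨hxb, c, hc, hcb.symm⟩
  have hCconn : ∀ c ∈ C, ∀ c' ∈ C, ∃ w : G.Walk c c', ∀ v ∈ w.support, v ∈ C := by
    intro c hc c' hc'
    obtain ⟨wH⟩ := hc.symm.trans hc'
    have hsup := hCsupp c c' wH hc
    refine ⟨wH.transfer G ?_, ?_⟩
    · intro e he
      have hHG : H ≤ G := fun a b hab => hab.1
      exact SimpleGraph.edgeSet_mono hHG (wH.edges_subset_edgeSet he)
    · intro v hv
      rw [SimpleGraph.Walk.support_transfer] at hv
      exact hsup v hv
  have hCx : ∀ c ∈ C, ¬ G.Adj x c := fun c hc => (hCD c hc).2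
  obtain ⟨y, hyC, hSy⟩ := exists_good_vertex hchordal x C S ⟨z0, hz0C⟩ hxC hCadj hCconn hCx
    (fun s hs => hs)
  have hyD : y ∈ D := hCD y hyC
  refine ⟨y, hyD.1, hyD.2, ?_⟩
  intro v w hcyc hlen
  by_cases hxy : s(x, y) ∈ w.edges
  · -- the cycle goes through the new edge
    by_contra hno
    push_neg at hno
    have hx : x ∈ w.support := SimpleGraph.Walk.fst_mem_support_of_mem_edges w hxy
    set w₂ := w.rotate x hx with hw₂
    have hcyc₂ : w₂.IsCycle := hcyc.rotate hx
    have hrotE := w.rotate_edges x hx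
    have he₂ : s(x, y) ∈ w₂.edges := hrotE.mem_iff.mpr hxy
    have hsupp₂ : ∀ z, z ∈ w₂.support ↔ z ∈ w.support := by
      intro z
      rw [hw₂, SimpleGraph.Walk.rotate, SimpleGraph.Walk.mem_support_append_iff]
      conv_rhs => rw [← w.take_spec hx]
      rw [SimpleGraph.Walk.mem_support_append_iff]
      tauto
    obtain ⟨p, hpp, hpe, hpsupp, hpedges, hplen⟩ := ChordalAux.cycle_decomp w₂ hcyc₂ he₂
    have hlen₂ : w₂.length = w.length := by
      have h := hrotE.perm.length_eq
      rwa [SimpleGraph.Walk.length_edges, SimpleGraph.Walk.length_edges] at h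
    have hpG : ∀ e ∈ p.edges, e ∈ G.edgeSet := by
      intro e he
      have hew : e ∈ w₂.edges := (hpedges e).mpr (Or.inr he)
      have hG' := w₂.edges_subset_edgeSet hew
      rw [SimpleGraph.edgeSet_sup] at hG'
      rcases hG' with h | h
      · exact h
      · exfalso
        rw [SimpleGraph.edgeSet_fromEdgeSet] at h
        have h1 := h.1
        rw [Set.mem_singleton_iff] at h1
        subst h1
        exact hpe he
    set q := p.transfer G hpG with hq
    have hqp : q.IsPath := hpp.transfer hpG
    have hqsup : ∀ z, z ∈ q.support ↔ z ∈ w.support := by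
      intro z
      rw [hq, SimpleGraph.Walk.support_transfer, hpsupp z, hsupp₂ z]
    have hqind : ChordalAux.WalkInd G q := by
      intro a b hab ha hb
      have h1 : s(a, b) ∈ w.edges :=
        hno a b ((SimpleGraph.sup_adj _ _ _ _).mpr (Or.inl hab)) ((hqsup a).mp ha) ((hqsup b).mp hb)
      have h2 : s(a, b) ∈ w₂.edges := hrotE.mem_iff.mpr h1
      rcases (hpedges _).mp h2 with heq | hin
      · exfalso
        rw [Sym2.eq_iff] at heq
        rcases heq with ⟨rfl, rfl⟩ | ⟨rfl, rfl⟩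
        · exact hyD.2 hab
        · exact hyD.2 hab.symm
      · rw [hq, SimpleGraph.Walk.edges_transfer]
        exact hin
    have hql : 3 ≤ q.length := by
      have hq1 : q.length = p.length := SimpleGraph.Walk.length_transfer p hpG
      omega
    obtain ⟨d, hd, hdf, hds⟩ := ChordalAux.exists_crossing_dart C q hxC hyC
    have hadjd : G.Adj d.fst d.snd := d.adj
    have haq : d.fst ∈ q.support := q.dart_fst_mem_support_of_mem_darts hd
    have hax : d.fst ≠ x := by
      intro h
      rw [h] at hadjd
      exact (hCD d.snd hds).2 hadjd
    have haS : d.fst ∈ S := by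
      rcases hCadj d.snd hds d.fst hadjd.symm with h | h
      · exact absurd h hdf
      · exact h
    have hxa : G.Adj x d.fst := haS.1
    have hay : G.Adj d.fst y := hSy d.fst haS
    have he1 : s(x, d.fst) ∈ q.edges := hqind x d.fst hxa q.start_mem_support haq
    obtain ⟨h1, q1, hq1⟩ := ChordalAux.edge_start_of_isPath q hqp he1
    have he2 : s(d.fst, y) ∈ q.edges := hqind d.fst y hay haq q.end_mem_support
    rw [hq1, SimpleGraph.Walk.edges_cons, List.mem_cons] at he2
    rcases he2 with he2 | he2
    · rw [Sym2.eq_iff] at he2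
      rcases he2 with ⟨h3, -⟩ | ⟨-, h4⟩
      · exact hax h3
      · exact hyD.1 h4
    · have hq1p : q1.IsPath := by
        rw [hq1] at hqp
        exact hqp.of_cons
      obtain ⟨h2, q2, hq2⟩ := ChordalAux.edge_start_of_isPath q1 hq1p he2
      have hq2p : q2.IsPath := by
        rw [hq2] at hq1p
        exact hq1p.of_cons
      have hnil : q2 = SimpleGraph.Walk.nil := (SimpleGraph.Walk.isPath_iff_eq_nil (p := q2)).mp hq2p
      rw [hq1, hq2, hnil] at hql
      simp at hql
  · -- the cycle avoids the new edge: transfer to G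
    have hG : ∀ e ∈ w.edges, e ∈ G.edgeSet := by
      intro e he
      have hG' := w.edges_subset_edgeSet he
      rw [SimpleGraph.edgeSet_sup] at hG'
      rcases hG' with h | h
      · exact h
      · exfalso
        rw [SimpleGraph.edgeSet_fromEdgeSet] at h
        have h1 := h.1
        rw [Set.mem_singleton_iff] at h1
        subst h1
        exact hxy he
    obtain ⟨a, b, hab, ha, hb, hne⟩ :=
      hchordal (w.transfer G hG) (hcyc.transfer hG)
        (by rwa [SimpleGraph.Walk.length_transfer])
    refine ⟨a, b, (SimpleGraph.sup_adj _ _ _ _).mpr (Or.inl hab), ?_, ?_, ?_⟩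
    · rwa [SimpleGraph.Walk.support_transfer] at ha
    · rwa [SimpleGraph.Walk.support_transfer] at hb
    · rwa [SimpleGraph.Walk.edges_transfer] at hne
end

section
/- Let G be a chordal graph with minimum degree k and let p be a nonnegative integer with p < k. Then G contains a chordal spanning subgraph with minimum degree exactly p. -/
open scoped Classical

namespace SimpleGraph
variable {V : Type*} {G : SimpleGraph V}

/-- A walk of length 1 is a single edge. -/
lemma Walk.length_one_adj {u v : V} (p : G.Walk u v) (h : p.length = 1) : G.Adj u v := by
  cases p with
  | nil => simp at h
  | cons ha q =>
    cases q with
    | nil => exact ha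
    | cons hb r => simp [Walk.length_cons] at h

/-- Shortcut lemma: a chord of a walk yields a strictly shorter walk with smaller support. -/
lemma Walk.exists_shortcut {x y c d : V} (P : G.Walk x y) (hadj : G.Adj c d)
    (hc : c ∈ P.support) (hd : d ∈ P.support) (hne : s(c, d) ∉ P.edges) :
    ∃ W : G.Walk x y, W.length < P.length ∧ ∀ z ∈ W.support, z ∈ P.support := by
  induction P with
  | nil =>
    simp only [Walk.support_nil, List.mem_singleton] at hc hd
    subst hc; subst hd; exact absurd rfl (G.ne_of_adj hadj)
  | @cons u z w h P' ih =>
    by_cases hcd' : c ∈ P'.support ∧ d ∈ P'.support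
    · obtain ⟨W', hW1, hW2⟩ := ih hcd'.1 hcd'.2 (fun hm => hne (by simp [Walk.edges_cons, hm]))
      refine ⟨Walk.cons h W', by simpa [Walk.length_cons] using hW1, ?_⟩
      intro t ht
      rw [Walk.support_cons, List.mem_cons] at ht ⊢
      exact ht.imp id (hW2 t)
    · have key : ∀ {a : V} (ha : G.Adj a z) (Q : G.Walk z w) (c' d' : V), G.Adj c' d' → c' = a →
          d' ∈ Q.support → s(c', d') ∉ (Walk.cons ha Q).edges →
          ∃ W : G.Walk a w, W.length < (Walk.cons ha Q).length ∧
            ∀ t ∈ W.support, t ∈ (Walk.cons ha Q).support := by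
        intro a ha Q c' d' hadj' hcu hdP hne'
        subst hcu
        have hdz : d' ≠ z := by
          rintro rfl
          exact hne' (by simp [Walk.edges_cons])
        refine ⟨Walk.cons hadj' (Q.dropUntil d' hdP), ?_, ?_⟩
        · have htk : 0 < (Q.takeUntil d' hdP).length := by
            rcases Nat.eq_zero_or_pos (Q.takeUntil d' hdP).length with h0 | h0
            · exact absurd (Walk.eq_of_length_eq_zero h0).symm hdz
            · exact h0
          have hsplit : (Q.takeUntil d' hdP).length + (Q.dropUntil d' hdP).length = Q.length := by
            have hs : ((Q.takeUntil d' hdP).append (Q.dropUntil d' hdP)).length = Q.length := by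
              rw [Q.take_spec hdP]
            rwa [Walk.length_append] at hs
          simp only [Walk.length_cons]
          omega
        · intro t ht
          rw [Walk.support_cons, List.mem_cons] at ht ⊢
          exact ht.imp id (fun h1 => Q.support_dropUntil_subset hdP h1)
      rw [Walk.support_cons, List.mem_cons] at hc hd
      push_neg at hcd'
      rcases hc with rfl | hc
      · rcases hd with rfl | hd
        · exact absurd rfl (G.ne_of_adj hadj)
        · exact key h P' c d hadj rfl hd hne
      · rcases hd with rfl | hd
        · exact key h P' d c hadj.symm rfl hc (by rwa [Sym2.eq_swap])
        · exact absurd hd (hcd' hc)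

/-- The chordality definition (inlined here to avoid forward reference issues). -/
def IsChordal' (G : SimpleGraph V) : Prop :=
  ∀ ⦃v : V⦄ (w : G.Walk v v), w.IsCycle → 3 < w.length →
    ∃ a b : V, G.Adj a b ∧ a ∈ w.support ∧ b ∈ w.support ∧ s(a, b) ∉ w.edges

/-- Chordality is inherited by induced subgraphs. -/
lemma IsChordal'.induce (h : IsChordal' G) (s : Set V) : IsChordal' (G.induce s) := by
  intro v w hw hl
  set f : G.induce s ↪g G := SimpleGraph.Embedding.induce s with hf
  have hinj : Function.Injective f := f.injective
  have hwc : (w.map f.toHom).IsCycle := (Walk.map_isCycle_iff_of_injective hinj).mpr hw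
  have hlen : 3 < (w.map f.toHom).length := by rwa [Walk.length_map]
  obtain ⟨a, b, hab, ha, hb, hnab⟩ := h (w.map f.toHom) hwc hlen
  rw [Walk.support_map, List.mem_map] at ha hb
  obtain ⟨a', ha', rfl⟩ := ha
  obtain ⟨b', hb', rfl⟩ := hb
  refine ⟨a', b', ?_, ha', hb', ?_⟩
  · exact f.map_rel_iff.mp hab
  · intro hmem
    apply hnab
    rw [Walk.edges_map, List.mem_map]
    exact ⟨s(a', b'), hmem, by simp⟩

section Separator

variable (G)

/-- Reachability from `a` avoiding the set `S`. -/
def GReach (S : Finset V) (a z : V) : Prop :=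
  ∃ w : G.Walk a z, ∀ t ∈ w.support, t ∉ S

/-- `S` separates `a` from `b`. -/
def GSep (a b : V) (S : Finset V) : Prop :=
  a ∉ S ∧ b ∉ S ∧ ∀ w : G.Walk a b, ∃ x ∈ S, x ∈ w.support

variable {G}

lemma GReach.not_mem {S : Finset V} {a z : V} (h : GReach G S a z) : z ∉ S := by
  obtain ⟨w, hw⟩ := h
  exact hw z w.end_mem_support

lemma GReach.refl {S : Finset V} {a : V} (ha : a ∉ S) : GReach G S a a :=
  ⟨Walk.nil, by simpa using ha⟩

lemma GReach.adj {S : Finset V} {a z z' : V} (h : GReach G S a z) (hadj : G.Adj z z')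
    (hz' : z' ∉ S) : GReach G S a z' := by
  obtain ⟨w, hw⟩ := h
  refine ⟨w.concat hadj, ?_⟩
  intro t ht
  rw [Walk.support_concat, List.mem_append] at ht
  rcases ht with ht | ht
  · exact hw t ht
  · rw [List.mem_singleton] at ht; subst ht; exact hz'

lemma GReach.of_mem_support {S : Finset V} {a z t : V} (w : G.Walk a z)
    (hw : ∀ t ∈ w.support, t ∉ S) (ht : t ∈ w.support) : GReach G S a t :=
  ⟨w.takeUntil t ht, fun s hs => hw s (w.support_takeUntil_subset ht hs)⟩

lemma GReach.connect {S : Finset V} {a z₁ z₂ : V} (h₁ : GReach G S a z₁)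
    (h₂ : GReach G S a z₂) :
    ∃ w : G.Walk z₁ z₂, ∀ t ∈ w.support, GReach G S a t := by
  obtain ⟨w₁, hw₁⟩ := h₁
  obtain ⟨w₂, hw₂⟩ := h₂
  refine ⟨w₁.reverse.append w₂, ?_⟩
  intro t ht
  have := (Walk.mem_support_append_iff _ _).mp ht
  rcases this with ht | ht
  · rw [Walk.support_reverse, List.mem_reverse] at ht
    exact GReach.of_mem_support w₁ hw₁ ht
  · exact GReach.of_mem_support w₂ hw₂ ht

lemma GSep.symm {a b : V} {S : Finset V} (h : GSep G a b S) : GSep G b a S := by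
  refine ⟨h.2.1, h.1, fun w => ?_⟩
  obtain ⟨x, hx, hxs⟩ := h.2.2 w.reverse
  exact ⟨x, hx, by rwa [Walk.support_reverse, List.mem_reverse] at hxs⟩

lemma gsep_exists {a b : V} [Fintype V] (hab : a ≠ b) (hnadj : ¬G.Adj a b) :
    GSep G a b (Finset.univ \ {a, b}) := by
  refine ⟨by simp, by simp, fun w => ?_⟩
  cases w with
  | nil => exact absurd rfl hab
  | cons h w' =>
    rename_i c
    have hca : c ≠ a := fun hc => G.irrefl (hc ▸ h)
    have hcb : c ≠ b := fun hc => hnadj (hc ▸ h)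
    exact ⟨c, by simp [hca, hcb], by simp [Walk.support_cons]⟩

/-- Each vertex of a minimum separator has a neighbor in the `a`-side. -/
lemma min_sep_neighbor [Fintype V] {a b x : V} {S : Finset V} (hS : GSep G a b S)
    (hmin : ∀ S', GSep G a b S' → S.card ≤ S'.card) (hx : x ∈ S) :
    ∃ z, GReach G S a z ∧ G.Adj x z := by
  have hax : a ≠ x := fun h => hS.1 (h ▸ hx)
  have hnsep : ¬ GSep G a b (S.erase x) := by
    intro hsep
    have := hmin _ hsep
    have := Finset.card_erase_lt_of_mem hx
    omega
  rw [GSep] at hnsep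
  push_neg at hnsep
  have h1 : a ∉ S.erase x := fun h => hS.1 (Finset.mem_of_mem_erase h)
  have h2 : b ∉ S.erase x := fun h => hS.2.1 (Finset.mem_of_mem_erase h)
  obtain ⟨w, hw⟩ := hnsep h1 h2
  -- pass to the bypass path
  set p := w.bypass with hp
  have hpavoid : ∀ t ∈ p.support, t ∉ S.erase x := fun t ht hts =>
    hw t hts (w.support_bypass_subset ht)
  have hxp : x ∈ p.support := by
    obtain ⟨x', hx'S, hx'p⟩ := hS.2.2 p
    have : x' = x := by
      by_contra hne
      exact hpavoid x' hx'p (Finset.mem_erase.mpr ⟨hne, hx'S⟩)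
    exact this ▸ hx'p
  -- the portion of `p` up to `x`
  set T := p.takeUntil x hxp with hT
  have hTavoid : ∀ t ∈ T.support, t ∉ S.erase x := fun t ht =>
    hpavoid t (p.support_takeUntil_subset hxp ht)
  have hTnotnil : ¬ T.reverse.Nil := by
    rw [Walk.nil_iff_length_eq, Walk.length_reverse]
    intro h0
    exact hax (Walk.eq_of_length_eq_zero h0)
  set z := T.reverse.getVert 1 with hz
  have hadj : G.Adj x z := T.reverse.adj_snd hTnotnil
  have hcount : T.support.count x = 1 := p.count_support_takeUntil_eq_one hxp
  refine ⟨z, ⟨T.reverse.tail.reverse, ?_⟩, hadj⟩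
  intro t ht
  rw [Walk.support_reverse, List.mem_reverse, Walk.support_tail_of_not_nil _ hTnotnil,
    Walk.support_reverse] at ht
  have htT : t ∈ T.support := by
    have := List.tail_sublist T.support.reverse
    exact List.mem_reverse.mp (this.subset ht)
  have hxnot : x ∉ T.support.reverse.tail := by
    have hcons : T.support.reverse = x :: T.support.reverse.tail := by
      rw [← Walk.support_reverse]
      exact T.reverse.support_eq_cons
    have hc : T.support.reverse.count x = 1 := by rw [List.count_reverse]; exact hcount
    rw [hcons, List.count_cons_self] at hc
    have h0 : List.count x T.support.reverse.tail = 0 := by omega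
    exact List.count_eq_zero.mp h0
  have htx : t ≠ x := fun h => hxnot (h ▸ ht)
  intro htS
  exact hTavoid t htT (Finset.mem_erase.mpr ⟨htx, htS⟩)

end Separator

section Clique

variable [Fintype V]

/-- A minimum `a`-`b` separator in a chordal graph is a clique. -/
lemma min_sep_clique (hch : IsChordal' G) {a b : V} {S : Finset V} (hS : GSep G a b S)
    (hmin : ∀ S', GSep G a b S' → S.card ≤ S'.card) :
    ∀ x ∈ S, ∀ y ∈ S, x ≠ y → G.Adj x y := by
  intro x hxS y hyS hxy
  by_contra hnadj
  set A : V → Prop := GReach G S a with hA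
  set B : V → Prop := GReach G S b with hB
  have hAB : ∀ t, A t → B t → False := by
    intro t ⟨w₁, hw₁⟩ ⟨w₂, hw₂⟩
    obtain ⟨s', hs'S, hs'⟩ := hS.2.2 (w₁.append w₂.reverse)
    rcases (Walk.mem_support_append_iff _ _).mp hs' with h | h
    · exact hw₁ s' h hs'S
    · rw [Walk.support_reverse, List.mem_reverse] at h
      exact hw₂ s' h hs'S
  have hAnotS : ∀ t, A t → t ∉ S := fun t ht => ht.not_mem
  have hBnotS : ∀ t, B t → t ∉ S := fun t ht => ht.not_mem
  have hxA : ¬ A x := fun h => hAnotS x h hxS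
  have hyA : ¬ A y := fun h => hAnotS y h hyS
  have hxB : ¬ B x := fun h => hBnotS x h hxS
  have hyB : ¬ B y := fun h => hBnotS y h hyS
  -- construct a walk from x to y with interior in A
  have hbuild : ∀ (R : V → Prop), (R = A ∨ R = B) →
      ∃ w : G.Walk x y, ∀ t ∈ w.support, t = x ∨ t = y ∨ R t := by
    rintro R hR
    have hsepside : ∃ c, (GSep G c b S ∧ R = GReach G S c) ∨ (GSep G a c S ∧ R = GReach G S c) := by
      rcases hR with rfl | rfl
      · exact ⟨a, Or.inl ⟨hS, rfl⟩⟩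
      · exact ⟨b, Or.inr ⟨hS.symm.symm, rfl⟩⟩
    obtain ⟨zx, hzxR, hzxadj⟩ : ∃ z, R z ∧ G.Adj x z := by
      rcases hR with rfl | rfl
      · exact min_sep_neighbor hS hmin hxS
      · obtain ⟨z, hz, hadj⟩ := min_sep_neighbor hS.symm
          (fun S' hS' => hmin S' hS'.symm) hxS
        exact ⟨z, hz, hadj⟩
    obtain ⟨zy, hzyR, hzyadj⟩ : ∃ z, R z ∧ G.Adj y z := by
      rcases hR with rfl | rfl
      · exact min_sep_neighbor hS hmin hyS
      · obtain ⟨z, hz, hadj⟩ := min_sep_neighbor hS.symm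
          (fun S' hS' => hmin S' hS'.symm) hyS
        exact ⟨z, hz, hadj⟩
    have hconn : ∃ w : G.Walk zx zy, ∀ t ∈ w.support, R t := by
      rcases hR with rfl | rfl
      · exact GReach.connect hzxR hzyR
      · exact GReach.connect hzxR hzyR
    obtain ⟨wm, hwm⟩ := hconn
    refine ⟨Walk.cons hzxadj (wm.append (Walk.cons hzyadj.symm Walk.nil)), ?_⟩
    intro t ht
    rw [Walk.support_cons, List.mem_cons] at ht
    rcases ht with rfl | ht
    · exact Or.inl rfl
    rcases (Walk.mem_support_append_iff _ _).mp ht with ht | ht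
    · exact Or.inr (Or.inr (hwm t ht))
    · rw [Walk.support_cons, List.mem_cons] at ht
      rcases ht with rfl | ht
      · exact Or.inr (Or.inr hzyR)
      · rw [Walk.support_nil, List.mem_singleton] at ht
        exact Or.inr (Or.inl ht)
  -- minimal such walks
  have hminwalk : ∀ (R : V → Prop), (R = A ∨ R = B) →
      ∃ P : G.Walk x y, P.IsPath ∧ (∀ t ∈ P.support, t = x ∨ t = y ∨ R t) ∧
        (∀ W : G.Walk x y, (∀ t ∈ W.support, t = x ∨ t = y ∨ R t) → P.length ≤ W.length) := by
    intro R hR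
    obtain ⟨w₀, hw₀⟩ := hbuild R hR
    have hex : ∃ n, ∃ w : G.Walk x y, (∀ t ∈ w.support, t = x ∨ t = y ∨ R t) ∧ w.length = n :=
      ⟨w₀.length, w₀, hw₀, rfl⟩
    obtain ⟨w₁, hw₁, hlen₁⟩ := Nat.find_spec hex
    refine ⟨w₁.bypass, w₁.bypass_isPath, ?_, ?_⟩
    · exact fun t ht => hw₁ t (w₁.support_bypass_subset ht)
    · intro W hW
      have h1 : Nat.find hex ≤ W.length := Nat.find_min' hex ⟨W, hW, rfl⟩
      have h2 : w₁.bypass.length ≤ w₁.length := w₁.length_bypass_le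
      omega
  obtain ⟨P, hPpath, hPsupp, hPmin⟩ := hminwalk A (Or.inl rfl)
  obtain ⟨Q, hQpath, hQsupp, hQmin⟩ := hminwalk B (Or.inr rfl)
  -- both have length at least 2
  have hlenP : 2 ≤ P.length := by
    rcases Nat.lt_or_ge P.length 2 with h | h
    · interval_cases hPl : P.length
      · exact absurd (Walk.eq_of_length_eq_zero hPl) hxy
      · exact absurd (P.length_one_adj hPl) hnadj
    · exact h
  have hlenQ : 2 ≤ Q.length := by
    rcases Nat.lt_or_ge Q.length 2 with h | h
    · interval_cases hQl : Q.length
      · exact absurd (Walk.eq_of_length_eq_zero hQl) hxy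
      · exact absurd (Q.length_one_adj hQl) hnadj
    · exact h
  -- the cycle through both sides
  set C : G.Walk x x := P.append Q.reverse with hC
  have hCsupp_eq : C.support = P.support ++ Q.reverse.support.tail := Walk.support_append _ _
  have hPnodup : P.support.Nodup := (Walk.isPath_def _).mp hPpath
  have hQrpath : Q.reverse.IsPath := hQpath.reverse
  have hQrnodup : Q.reverse.support.Nodup := (Walk.isPath_def _).mp hQrpath
  have hPtailnodup : P.support.tail.Nodup := (List.tail_sublist _).nodup hPnodup
  have hQrtailnodup : Q.reverse.support.tail.Nodup := (List.tail_sublist _).nodup hQrnodup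
  have hPtail : ∀ t ∈ P.support.tail, t = y ∨ A t := by
    intro t ht
    have htP : t ∈ P.support := by
      rw [P.support_eq_cons]; exact List.mem_cons_of_mem _ ht
    have hxnot : x ∉ P.support.tail := by
      have := hPnodup
      rw [P.support_eq_cons, List.nodup_cons] at this
      exact this.1
    have htx : t ≠ x := fun h => hxnot (h ▸ ht)
    rcases hPsupp t htP with h | h | h
    · exact absurd h htx
    · exact Or.inl h
    · exact Or.inr h
  have hQrtail : ∀ t ∈ Q.reverse.support.tail, t = x ∨ B t := by
    intro t ht
    have htQr : t ∈ Q.reverse.support := by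
      rw [Q.reverse.support_eq_cons]; exact List.mem_cons_of_mem _ ht
    have htQ : t ∈ Q.support := by
      rwa [Walk.support_reverse, List.mem_reverse] at htQr
    have hynot : y ∉ Q.reverse.support.tail := by
      have := hQrnodup
      rw [Q.reverse.support_eq_cons, List.nodup_cons] at this
      exact this.1
    have hty : t ≠ y := fun h => hynot (h ▸ ht)
    rcases hQsupp t htQ with h | h | h
    · exact Or.inl h
    · exact absurd h hty
    · exact Or.inr h
  have hdisj2 : ∀ t, (t = y ∨ A t) → (t = x ∨ B t) → False := by
    rintro t (rfl | hA1) (h2 | hB1)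
    · exact hxy h2.symm
    · exact hyB hB1
    · exact hxA (h2 ▸ hA1)
    · exact hAB t hA1 hB1
  have hCtailnodup : C.support.tail.Nodup := by
    have : C.support.tail = P.support.tail ++ Q.reverse.support.tail := by
      rw [hCsupp_eq, P.support_eq_cons]; rfl
    rw [this]
    exact List.Nodup.append hPtailnodup hQrtailnodup
      (fun t htP htQ => hdisj2 t (hPtail t htP) (hQrtail t htQ))
  have hinterPQ : ∀ t, t ∈ P.support → t ∈ Q.support → t = x ∨ t = y := by
    intro t h1 h2
    rcases hPsupp t h1 with h | h | h
    · exact Or.inl h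
    · exact Or.inr h
    · rcases hQsupp t h2 with h' | h' | h'
      · exact Or.inl h'
      · exact Or.inr h'
      · exact absurd h' (fun hb => hAB t h hb)
  have hsxynotP : s(x, y) ∉ P.edges := by
    intro h
    have := hPpath.length_eq_one_of_mem_edges h
    omega
  have hsxynotQ : s(x, y) ∉ Q.edges := by
    intro h
    have := hQpath.length_eq_one_of_mem_edges h
    omega
  have hCtrail : C.edges.Nodup := by
    rw [hC, Walk.edges_append]
    refine List.Nodup.append hPpath.isTrail.edges_nodup hQrpath.isTrail.edges_nodup ?_
    intro e heP heQr
    have heQ : e ∈ Q.edges := by rwa [Walk.edges_reverse, List.mem_reverse] at heQr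
    induction e using Sym2.ind with
    | _ c d =>
      have hadjcd : G.Adj c d := P.adj_of_mem_edges heP
      have hcP : c ∈ P.support := P.fst_mem_support_of_mem_edges heP
      have hdP : d ∈ P.support := P.snd_mem_support_of_mem_edges heP
      have hcQ : c ∈ Q.support := Q.fst_mem_support_of_mem_edges heQ
      have hdQ : d ∈ Q.support := Q.snd_mem_support_of_mem_edges heQ
      rcases hinterPQ c hcP hcQ with rfl | rfl <;> rcases hinterPQ d hdP hdQ with rfl | rfl
      · exact G.irrefl hadjcd
      · exact hsxynotP heP
      · exact hsxynotP (by rwa [Sym2.eq_swap] at heP)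
      · exact G.irrefl hadjcd
  have hClen : C.length = P.length + Q.length := by
    rw [hC, Walk.length_append, Walk.length_reverse]
  have hCne : C ≠ Walk.nil := by
    intro h
    have := congrArg Walk.length h
    rw [hClen] at this
    simp only [Walk.length_nil] at this
    omega
  have hCcycle : C.IsCycle := ⟨⟨⟨hCtrail⟩, hCne⟩, hCtailnodup⟩
  obtain ⟨c, d, hcd, hcC, hdC, hche⟩ := hch C hCcycle (by omega)
  have hclass : ∀ t, t ∈ C.support → t = x ∨ t = y ∨ A t ∨ B t := by
    intro t ht
    rw [hCsupp_eq, List.mem_append] at ht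
    rcases ht with ht | ht
    · rcases hPsupp t ht with h | h | h
      · exact Or.inl h
      · exact Or.inr (Or.inl h)
      · exact Or.inr (Or.inr (Or.inl h))
    · rcases hQrtail t ht with h | h
      · exact Or.inl h
      · exact Or.inr (Or.inr (Or.inr h))
  have hAmem : ∀ t, A t → t ∈ C.support → t ∈ P.support := by
    intro t htA ht
    rw [hCsupp_eq, List.mem_append] at ht
    rcases ht with ht | ht
    · exact ht
    · rcases hQrtail t ht with h | h
      · exact absurd (h ▸ htA) hxA
      · exact absurd htA (fun h' => hAB t h' h)
  have hBmem : ∀ t, B t → t ∈ C.support → t ∈ Q.support := by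
    intro t htB ht
    rw [hCsupp_eq, List.mem_append] at ht
    rcases ht with ht | ht
    · rcases hPsupp t ht with h | h | h
      · exact absurd (h ▸ htB) hxB
      · exact absurd (h ▸ htB) hyB
      · exact absurd h (fun h' => hAB t h' htB)
    · have : t ∈ Q.reverse.support := by
        rw [Q.reverse.support_eq_cons]; exact List.mem_cons_of_mem _ ht
      rwa [Walk.support_reverse, List.mem_reverse] at this
  have hPedge : ∀ e ∈ P.edges, e ∈ C.edges := by
    intro e he
    rw [hC, Walk.edges_append]
    exact List.mem_append_left _ he
  have hQedge : ∀ e ∈ Q.edges, e ∈ C.edges := by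
    intro e he
    rw [hC, Walk.edges_append]
    exact List.mem_append_right _ (by rwa [Walk.edges_reverse, List.mem_reverse])
  have hshortA : ∀ c' d', G.Adj c' d' → c' ∈ P.support → d' ∈ P.support →
      s(c', d') ∉ C.edges → False := by
    intro c' d' hcd' hc' hd' hne'
    obtain ⟨W, hWlen, hWsupp⟩ := P.exists_shortcut hcd' hc' hd' (fun h => hne' (hPedge _ h))
    have := hPmin W (fun t ht => hPsupp t (hWsupp t ht))
    omega
  have hshortB : ∀ c' d', G.Adj c' d' → c' ∈ Q.support → d' ∈ Q.support →
      s(c', d') ∉ C.edges → False := by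
    intro c' d' hcd' hc' hd' hne'
    obtain ⟨W, hWlen, hWsupp⟩ := Q.exists_shortcut hcd' hc' hd' (fun h => hne' (hQedge _ h))
    have := hQmin W (fun t ht => hQsupp t (hWsupp t ht))
    omega
  have hAside : ∀ c' d', G.Adj c' d' → A c' → c' ∈ C.support → d' ∈ C.support →
      s(c', d') ∉ C.edges → False := by
    intro c' d' hcd' hcA' hc' hd' hne'
    have hcP : c' ∈ P.support := hAmem c' hcA' hc'
    have hdP : d' ∈ P.support := by
      rcases hclass d' hd' with rfl | rfl | hdA | hdB
      · exact P.start_mem_support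
      · exact P.end_mem_support
      · exact hAmem d' hdA hd'
      · exact absurd (hcA'.adj hcd' (hBnotS d' hdB)) (fun h => hAB d' h hdB)
    exact hshortA c' d' hcd' hcP hdP hne'
  have hBside : ∀ c' d', G.Adj c' d' → B c' → c' ∈ C.support → d' ∈ C.support →
      s(c', d') ∉ C.edges → False := by
    intro c' d' hcd' hcB' hc' hd' hne'
    have hcQ : c' ∈ Q.support := hBmem c' hcB' hc'
    have hdQ : d' ∈ Q.support := by
      rcases hclass d' hd' with rfl | rfl | hdA | hdB
      · exact Q.start_mem_support
      · exact Q.end_mem_support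
      · exact absurd (hcB'.adj hcd' (hAnotS d' hdA)) (fun h => hAB d' hdA h)
      · exact hBmem d' hdB hd'
    exact hshortB c' d' hcd' hcQ hdQ hne'
  have hswap : s(d, c) ∉ C.edges := by rwa [Sym2.eq_swap]
  rcases hclass c hcC with rfl | rfl | hcA' | hcB'
  · rcases hclass d hdC with rfl | rfl | hdA | hdB
    · exact G.irrefl hcd
    · exact hnadj hcd
    · exact hAside d c hcd.symm hdA hdC hcC hswap
    · exact hBside d c hcd.symm hdB hdC hcC hswap
  · rcases hclass d hdC with rfl | rfl | hdA | hdB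
    · exact hnadj hcd.symm
    · exact G.irrefl hcd
    · exact hAside d c hcd.symm hdA hdC hcC hswap
    · exact hBside d c hcd.symm hdB hdC hcC hswap
  · exact hAside c d hcd hcA' hcC hdC hche
  · exact hBside c d hcd hcB' hcC hdC hche

end Clique

/-- A vertex is simplicial if its neighborhood is a clique. -/
def Simplicial (G : SimpleGraph V) (v : V) : Prop :=
  ∀ x y, G.Adj v x → G.Adj v y → x ≠ y → G.Adj x y

lemma greach_both_false {a b t : V} {S : Finset V} (hS : GSep G a b S)
    (h1 : GReach G S a t) (h2 : GReach G S b t) : False := by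
  obtain ⟨w₁, hw₁⟩ := h1
  obtain ⟨w₂, hw₂⟩ := h2
  obtain ⟨s', hs'S, hs'⟩ := hS.2.2 (w₁.append w₂.reverse)
  rcases (Walk.mem_support_append_iff _ _).mp hs' with h | h
  · exact hw₁ s' h hs'S
  · rw [Walk.support_reverse, List.mem_reverse] at h
    exact hw₂ s' h hs'S

end SimpleGraph

universe u

open SimpleGraph in
lemma dirac_aux : ∀ (n : ℕ) (W : Type u) [Fintype W] (G : SimpleGraph W),
    Fintype.card W ≤ n → IsChordal' G →
    ((Nonempty W → ∃ v, Simplicial G v) ∧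
      ∀ a b : W, a ≠ b → ¬G.Adj a b →
        ∃ u w : W, u ≠ w ∧ ¬G.Adj u w ∧ Simplicial G u ∧ Simplicial G w) := by
  intro n
  induction n with
  | zero =>
    intro W _ G hcard _
    constructor
    · rintro ⟨v⟩
      exact absurd (Fintype.card_pos_iff.mpr ⟨v⟩) (by omega)
    · intro a b _ _
      exact absurd (Fintype.card_pos_iff.mpr ⟨a⟩) (by omega)
  | succ n ih =>
    intro W _ G hcard hch
    have main : ∀ a b : W, a ≠ b → ¬G.Adj a b →
        ∃ u w : W, u ≠ w ∧ ¬G.Adj u w ∧ Simplicial G u ∧ Simplicial G w := by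
      intro a b hab hnadj
      have hN : ∃ m, ∃ S : Finset W, GSep G a b S ∧ S.card = m :=
        ⟨_, Finset.univ \ {a, b}, gsep_exists hab hnadj, rfl⟩
      obtain ⟨S, hS, hScard⟩ := Nat.find_spec hN
      have hmin : ∀ S', GSep G a b S' → S.card ≤ S'.card := by
        intro S' h
        rw [hScard]
        exact Nat.find_min' hN ⟨S', h, rfl⟩
      have hclique := min_sep_clique hch hS hmin
      -- one simplicial vertex on each side
      have side : ∀ (c d : W), GSep G c d S → (∀ S', GSep G c d S' → S.card ≤ S'.card) →
          ∃ u : W, GReach G S c u ∧ Simplicial G u := by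
        intro c d hScd hmincd
        classical
        set sA : Set W := {z | GReach G S c z ∨ z ∈ S} with hsA
        have hdA : d ∉ sA := by
          rintro (h | h)
          · obtain ⟨w', hw'⟩ := h
            obtain ⟨s', hs'S, hs'⟩ := hScd.2.2 w'
            exact hw' s' hs' hs'S
          · exact hScd.2.1 h
        have hcardA : Fintype.card ↥sA ≤ n := by
          have hlt : Fintype.card ↥sA < Fintype.card W := by
            apply Fintype.card_lt_of_injective_of_notMem (Subtype.val : ↥sA → W)
              Subtype.val_injective (b := d)
            rwa [Subtype.range_coe]
          omega
        have hchA : IsChordal' (G.induce sA) := hch.induce sA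
        have hliftmem : ∀ (z : ↥sA), GReach G S c z.val → ∀ x : W, G.Adj z.val x → x ∈ sA := by
          intro z hz x hadj
          by_cases hxS : x ∈ S
          · exact Or.inr hxS
          · exact Or.inl (hz.adj hadj hxS)
        have hlift : ∀ (z : ↥sA), GReach G S c z.val →
            Simplicial (G.induce sA) z → Simplicial G z.val := by
          intro z hz hsimp x y hzx hzy hxy
          have hxA : x ∈ sA := hliftmem z hz x hzx
          have hyA : y ∈ sA := hliftmem z hz y hzy
          have h1 : (G.induce sA).Adj z ⟨x, hxA⟩ := by simpa using hzx
          have h2 : (G.induce sA).Adj z ⟨y, hyA⟩ := by simpa using hzy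
          have := hsimp ⟨x, hxA⟩ ⟨y, hyA⟩ h1 h2 (by simp [Subtype.ext_iff, hxy])
          simpa using this
        have hcA : c ∈ sA := Or.inl (GReach.refl hScd.1)
        by_cases hcomp : ∀ u v : ↥sA, u ≠ v → (G.induce sA).Adj u v
        · refine ⟨c, GReach.refl hScd.1, hlift ⟨c, hcA⟩ (GReach.refl hScd.1) ?_⟩
          intro x y _ _ hxy
          exact hcomp x y hxy
        · push_neg at hcomp
          obtain ⟨u, v, huv, hnadjuv⟩ := hcomp
          obtain ⟨u', v', hne', hnadj', hsimp1, hsimp2⟩ :=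
            (ih ↥sA (G.induce sA) hcardA hchA).2 u v huv hnadjuv
          have hpick : GReach G S c u'.val ∨ GReach G S c v'.val := by
            by_contra hcon
            push_neg at hcon
            have hu'S : u'.val ∈ S := u'.property.resolve_left hcon.1
            have hv'S : v'.val ∈ S := v'.property.resolve_left hcon.2
            have : G.Adj u'.val v'.val :=
              hclique _ hu'S _ hv'S (fun h => hne' (Subtype.ext h))
            exact hnadj' (by simpa using this)
          rcases hpick with h | h
          · exact ⟨u'.val, h, hlift u' h hsimp1⟩
          · exact ⟨v'.val, h, hlift v' h hsimp2⟩
      obtain ⟨u, huA, husimp⟩ := side a b hS hmin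
      obtain ⟨w, hwB, hwsimp⟩ := side b a hS.symm (fun S' h => hmin S' h.symm)
      refine ⟨u, w, ?_, ?_, husimp, hwsimp⟩
      · rintro rfl
        exact greach_both_false hS huA hwB
      · intro hadj
        have hwS : w ∉ S := hwB.not_mem
        exact greach_both_false hS (huA.adj hadj hwS) hwB
    refine ⟨?_, main⟩
    rintro ⟨v⟩
    by_cases hcomp : ∀ x y : W, x ≠ y → G.Adj x y
    · exact ⟨v, fun x y _ _ hxy => hcomp x y hxy⟩
    · push_neg at hcomp
      obtain ⟨a, b, hab, hnadj⟩ := hcomp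
      obtain ⟨u, _, _, _, husimp, _⟩ := main a b hab hnadj
      exact ⟨u, husimp⟩

namespace SimpleGraph
variable {V : Type*} {G : SimpleGraph V}

lemma chordal_deleteEdge {H : SimpleGraph V} (hch : IsChordal' H) {u v : V}
    (hsimp : Simplicial H v) : IsChordal' (H.deleteEdges {s(u, v)}) := by
  intro v0 w hw hlen
  have hle : H.deleteEdges {s(u, v)} ≤ H := H.deleteEdges_le _
  have hsub : ∀ e ∈ w.edges, e ∈ H.edgeSet := fun e he =>
    (edgeSet_mono hle) (w.edges_subset_edgeSet he)
  set w' := w.transfer H hsub with hw'def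
  have hw'c : w'.IsCycle := hw.transfer hsub
  have hw'len : 3 < w'.length := by rwa [Walk.length_transfer]
  obtain ⟨aa, bb, hab, haS, hbS, hne⟩ := hch w' hw'c hw'len
  rw [Walk.support_transfer] at haS hbS
  rw [Walk.edges_transfer] at hne
  by_cases hcase : s(aa, bb) = s(u, v)
  · -- the only available chord is `uv` itself; use the simplicial vertex
    have hvsupp : v ∈ w.support := by
      rw [Sym2.eq_iff] at hcase
      rcases hcase with ⟨rfl, rfl⟩ | ⟨rfl, rfl⟩
      · exact hbS
      · exact haS
    have huvne : s(u, v) ∉ w.edges := by rwa [hcase] at hne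
    set w2 := w.rotate v hvsupp with hw2def
    have hw2c : w2.IsCycle := hw.rotate hvsupp
    have hw2len : w2.length = w.length := by
      have h1 := (w.rotate_edges v hvsupp).perm.length_eq
      rw [Walk.length_edges, Walk.length_edges] at h1
      exact h1
    have hwnn : ¬ w.Nil := by
      rw [Walk.nil_iff_length_eq]; omega
    have hw2nn : ¬ w2.Nil := hw2c.not_nil
    have htail1 : ∀ t, t ∈ w.support ↔ t ∈ w.support.tail := by
      intro t
      constructor
      · intro ht
        rw [w.support_eq_cons, List.mem_cons] at ht
        rcases ht with rfl | ht
        · rw [← w.support_tail_of_not_nil hwnn]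
          exact w.tail.end_mem_support
        · exact ht
      · intro ht
        rw [w.support_eq_cons]
        exact List.mem_cons_of_mem _ ht
    have htail2 : ∀ t, t ∈ w2.support ↔ t ∈ w2.support.tail := by
      intro t
      constructor
      · intro ht
        rw [w2.support_eq_cons, List.mem_cons] at ht
        rcases ht with rfl | ht
        · rw [← w2.support_tail_of_not_nil hw2nn]
          exact w2.tail.end_mem_support
        · exact ht
      · intro ht
        rw [w2.support_eq_cons]
        exact List.mem_cons_of_mem _ ht
    have hmemsupp : ∀ t, t ∈ w2.support ↔ t ∈ w.support := by
      intro t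
      rw [htail1 t, htail2 t]
      exact (w.support_rotate v hvsupp).mem_iff
    have hmemedge : ∀ e, e ∈ w2.edges ↔ e ∈ w.edges :=
      fun e => (w.rotate_edges v hvsupp).mem_iff
    have hnn : ¬ w2.Nil := hw2c.not_nil
    set x := w2.getVert 1 with hxdef
    have hadj1 : (H.deleteEdges {s(u, v)}).Adj v x := w2.adj_snd hnn
    set q := w2.tail with hqdef
    have hconsq : Walk.cons hadj1 q = w2 := w2.cons_tail_eq hnn
    have hqlen : q.length + 1 = w2.length := w2.length_tail_add_one hnn
    have hqrnn : ¬ q.reverse.Nil := by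
      rw [Walk.nil_iff_length_eq, Walk.length_reverse]
      omega
    set y := q.reverse.getVert 1 with hydef
    have hadj2 : (H.deleteEdges {s(u, v)}).Adj v y := q.reverse.adj_snd hqrnn
    set r := q.reverse.tail with hrdef
    have hconsr : Walk.cons hadj2 r = q.reverse := q.reverse.cons_tail_eq hqrnn
    have hrlen : r.length + 1 = q.reverse.length := q.reverse.length_tail_add_one hqrnn
    have hHvx : H.Adj v x := (deleteEdges_adj.mp hadj1).1
    have hHvy : H.Adj v y := (deleteEdges_adj.mp hadj2).1
    -- first and last edges of w2
    have hvx_mem : s(v, x) ∈ w2.edges := by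
      rw [← hconsq, Walk.edges_cons]
      exact List.mem_cons_self
    have hvy_mem : s(v, y) ∈ w2.edges := by
      have h1 : s(v, y) ∈ q.reverse.edges := by
        rw [← hconsr, Walk.edges_cons]
        exact List.mem_cons_self
      rw [Walk.edges_reverse, List.mem_reverse] at h1
      rw [← hconsq, Walk.edges_cons]
      exact List.mem_cons_of_mem _ h1
    have huvne2 : s(u, v) ∉ w2.edges := fun h => huvne ((hmemedge _).mp h)
    have hxu : x ≠ u := by
      intro hxu
      have heq : s(v, x) = s(u, v) := by rw [hxu, Sym2.eq_swap]
      rw [heq] at hvx_mem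
      exact huvne2 hvx_mem
    have hyu : y ≠ u := by
      intro hyu
      have heq : s(v, y) = s(u, v) := by rw [hyu, Sym2.eq_swap]
      rw [heq] at hvy_mem
      exact huvne2 hvy_mem
    -- q is a path
    have hqpath : q.IsPath := by
      have := hw2c
      rw [← hconsq, Walk.cons_isCycle_iff] at this
      exact this.1
    have hrpath : r.IsPath := hqpath.reverse.tail
    have hxy : x ≠ y := by
      intro hxyeq
      have hcp : (r.copy rfl hxyeq).IsPath := by
        simp only [Walk.isPath_copy]; exact hrpath
      have hnilr := Walk.isPath_iff_eq_nil.mp hcp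
      have hlr : r.length = 0 := by
        have := congrArg Walk.length hnilr
        simpa using this
      rw [Walk.length_reverse] at hrlen
      omega
    have hHxy : H.Adj x y := hsimp x y hHvx hHvy hxy
    have hxyuv : s(x, y) ≠ s(u, v) := by
      intro heq
      rw [Sym2.eq_iff] at heq
      rcases heq with ⟨h1, h2⟩ | ⟨h1, h2⟩
      · exact hHvy.ne h2.symm
      · exact hHvx.ne h1.symm
    have hchord : (H.deleteEdges {s(u, v)}).Adj x y :=
      deleteEdges_adj.mpr ⟨hHxy, by simpa using hxyuv⟩
    have hxsupp : x ∈ w.support := by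
      rw [← hmemsupp]
      rw [← hconsq, Walk.support_cons]
      exact List.mem_cons_of_mem _ q.start_mem_support
    have hysupp : y ∈ w.support := by
      rw [← hmemsupp]
      rw [← hconsq, Walk.support_cons]
      apply List.mem_cons_of_mem
      have : y ∈ q.reverse.support := by
        rw [← hconsr, Walk.support_cons]
        exact List.mem_cons_of_mem _ r.start_mem_support
      rwa [Walk.support_reverse, List.mem_reverse] at this
    have hxynotin : s(x, y) ∉ w.edges := by
      rw [← hmemedge, ← hconsq, Walk.edges_cons]
      intro hmem
      rcases List.mem_cons.mp hmem with h | h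
      · rw [Sym2.eq_iff] at h
        rcases h with ⟨h1, -⟩ | ⟨-, h2⟩
        · exact hHvx.ne h1.symm
        · exact hHvy.ne h2.symm
      · have h2 : s(x, y) ∈ q.reverse.edges := by
          rwa [Walk.edges_reverse, List.mem_reverse]
        rw [← hconsr, Walk.edges_cons] at h2
        rcases List.mem_cons.mp h2 with h3 | h3
        · rw [Sym2.eq_iff] at h3
          rcases h3 with ⟨h4, -⟩ | ⟨-, h5⟩
          · exact hHvx.ne h4.symm
          · exact hHvy.ne h5.symm
        · have h3' : s(x, y) ∈ r.reverse.edges := by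
            rw [Walk.edges_reverse, List.mem_reverse]; exact h3
          have hl1 : r.reverse.length = 1 := hrpath.reverse.length_eq_one_of_mem_edges h3'
          rw [Walk.length_reverse] at hl1
          rw [Walk.length_reverse] at hrlen
          omega
    exact ⟨x, y, hchord, hxsupp, hysupp, hxynotin⟩
  · refine ⟨aa, bb, deleteEdges_adj.mpr ⟨hab, by simpa using hcase⟩, haS, hbS, hne⟩

end SimpleGraph

namespace SimpleGraph
variable {V : Type*} {G : SimpleGraph V}

section Main
variable [Fintype V]

/-- Degrees drop by at most one when deleting a single edge. -/
lemma degree_deleteEdge_ge {H : SimpleGraph V} {u v : V} (huv : u ≠ v) (t : V) :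
    H.degree t - 1 ≤ (H.deleteEdges {s(u, v)}).degree t := by
  classical
  set c : V := if t = u then v else u with hc
  have hsub : (H.neighborFinset t).erase c ⊆ (H.deleteEdges {s(u, v)}).neighborFinset t := by
    intro z hz
    rw [Finset.mem_erase] at hz
    obtain ⟨hzc, hzadj⟩ := hz
    rw [mem_neighborFinset] at hzadj ⊢
    rw [deleteEdges_adj]
    refine ⟨hzadj, ?_⟩
    intro hmem
    rw [Set.mem_singleton_iff, Sym2.eq_iff] at hmem
    rcases hmem with ⟨h1, h2⟩ | ⟨h1, h2⟩
    · apply hzc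
      rw [hc, if_pos h1, h2]
    · apply hzc
      rw [hc, if_neg (h1 ▸ huv.symm : t ≠ u), h2]
  have hcard := Finset.card_le_card hsub
  have herase : (H.neighborFinset t).card - 1 ≤ ((H.neighborFinset t).erase c).card :=
    Finset.pred_card_le_card_erase
  rw [card_neighborFinset_eq_degree] at herase
  rw [card_neighborFinset_eq_degree] at hcard
  omega

lemma main_induction [Nonempty V] (G : SimpleGraph V) (p : ℕ) :
    ∀ (m : ℕ) (H : SimpleGraph V), H.edgeFinset.card ≤ m → H ≤ G → H.IsChordal' →
      p ≤ H.minDegree → ∃ H', H' ≤ G ∧ H'.IsChordal' ∧ H'.minDegree = p := by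
  classical
  intro m
  induction m with
  | zero =>
    intro H hcard hle hch hmd
    refine ⟨H, hle, hch, ?_⟩
    by_contra hmdp
    have hmd1 : 1 ≤ H.minDegree := by omega
    obtain ⟨v, -⟩ := H.exists_minimal_degree_vertex
    have hdeg : 1 ≤ H.degree v := le_trans hmd1 (H.minDegree_le_degree v)
    obtain ⟨w, hw⟩ := (H.degree_pos_iff_exists_adj _).mp hdeg
    have : s(v, w) ∈ H.edgeFinset := mem_edgeFinset.mpr hw
    have : 0 < H.edgeFinset.card := Finset.card_pos.mpr ⟨_, this⟩
    omega
  | succ n ih =>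
    intro H hcard hle hch hmd
    by_cases hmdp : H.minDegree = p
    · exact ⟨H, hle, hch, hmdp⟩
    · have hmd1 : p + 1 ≤ H.minDegree := by
        rcases Nat.lt_or_ge H.minDegree (p + 1) with h | h
        · omega
        · exact h
      obtain ⟨v, hv⟩ := (dirac_aux (Fintype.card V) V H le_rfl hch).1 ‹Nonempty V›
      have hdeg : 1 ≤ H.degree v := le_trans (by omega) (H.minDegree_le_degree v)
      obtain ⟨u, hu⟩ := (H.degree_pos_iff_exists_adj _).mp hdeg
      set H' := H.deleteEdges {s(u, v)} with hH'
      have hle' : H' ≤ G := le_trans (H.deleteEdges_le _) hle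
      have hch' : H'.IsChordal' := chordal_deleteEdge hch hv
      have hmd' : p ≤ H'.minDegree := by
        apply le_minDegree_of_forall_le_degree
        intro t
        show p ≤ (H.deleteEdges {s(u, v)}).degree t
        have h1 := degree_deleteEdge_ge (H := H) (hu.ne.symm : u ≠ v) t
        have h2 := H.minDegree_le_degree t
        omega
      have hcard' : H'.edgeFinset.card ≤ n := by
        have hmemuv : s(u, v) ∈ H.edgeFinset := mem_edgeFinset.mpr hu.symm
        have hsub : H'.edgeFinset ⊆ H.edgeFinset.erase s(u, v) := by
          intro e he
          rw [mem_edgeFinset] at he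
          rw [hH', edgeSet_deleteEdges] at he
          rw [Finset.mem_erase, mem_edgeFinset]
          exact ⟨fun h => he.2 (h ▸ rfl), he.1⟩
        have := Finset.card_le_card hsub
        rw [Finset.card_erase_of_mem hmemuv] at this
        have hpos : 0 < H.edgeFinset.card := Finset.card_pos.mpr ⟨_, hmemuv⟩
        omega
      exact ih H' (by convert hcard') hle' hch' (by convert hmd')

end Main
end SimpleGraph

/-- A chordal graph of minimum degree `k` contains, for every `p < k`, a chordal spanning
subgraph of minimum degree exactly `p`. -/
theorem stmt_2 {V : Type*} [Fintype V] (G : SimpleGraph V) (k p : ℕ)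
    (hchordal : G.IsChordal) (hmin : G.minDegree = k) (hp : p < k) :
    ∃ H : SimpleGraph V, H ≤ G ∧ H.IsChordal ∧ H.minDegree = p := by
  classical
  have hnV : Nonempty V := by
    by_contra h
    rw [not_nonempty_iff] at h
    have h0 : G.minDegree = 0 := by
      simp [SimpleGraph.minDegree, Finset.univ_eq_empty]
    omega
  have hch : G.IsChordal' := hchordal
  obtain ⟨H, hle, hch', hmd⟩ := SimpleGraph.main_induction G p G.edgeFinset.card G le_rfl
    le_rfl hch (by rw [hmin]; omega)
  exact ⟨H, hle, hch', hmd⟩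
end

section
/- Let G be a chordal graph, let x be a simplicial vertex of G, and let e be an edge of G incident with x. Then the graph G − e obtained from G by deleting the edge e is chordal. -/
open scoped Classical

/-- If `x` is a simplicial vertex of a chordal graph `G` and `e = xy` is an edge of `G`
incident with `x`, then `G - e` is chordal. -/
theorem stmt_3 {V : Type*} (G : SimpleGraph V) (x y : V)
    (hchordal : G.IsChordal) (hx : G.IsSimplicial x) (he : G.Adj x y) :
    (G.deleteEdges {s(x, y)}).IsChordal := by
  set G' := G.deleteEdges {s(x, y)} with hG'
  have hle : G' ≤ G := SimpleGraph.deleteEdges_le _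
  intro v w hcyc hlen
  have hsub : ∀ e ∈ w.edges, e ∈ G.edgeSet := fun e hew =>
    (SimpleGraph.edgeSet_subset_edgeSet.mpr hle) (w.edges_subset_edgeSet hew)
  have hcyc' : (w.transfer G hsub).IsCycle := hcyc.transfer hsub
  have hlen' : 3 < (w.transfer G hsub).length := by rwa [SimpleGraph.Walk.length_transfer]
  obtain ⟨a, b, hab, ha, hb, hnab⟩ := hchordal (w.transfer G hsub) hcyc' hlen'
  rw [SimpleGraph.Walk.support_transfer] at ha hb
  rw [SimpleGraph.Walk.edges_transfer] at hnab
  by_cases hxy : s(a, b) = s(x, y)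
  · -- the chord is the deleted edge; x lies on the cycle
    have hxmem : x ∈ w.support := by
      rw [Sym2.eq_iff] at hxy
      rcases hxy with ⟨h1, _⟩ | ⟨_, h2⟩
      · rwa [h1] at ha
      · rwa [h2] at hb
    set c := w.rotate x hxmem with hc
    have hcycc : c.IsCycle := hcyc.rotate hxmem
    have hsupp : c.support.tail ~r w.support.tail := w.support_rotate x hxmem
    have hedges : c.edges ~r w.edges := w.rotate_edges x hxmem
    have hlenc : 3 < c.length := by
      have := hedges.perm.length_eq
      simp only [SimpleGraph.Walk.length_edges] at this
      omega
    clear_value c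
    cases c with
    | nil => simp at hlenc
    | @cons _ u _ h₁ p₁ =>
      -- c = cons h₁ p₁, h₁ : G'.Adj x u, p₁ : G'.Walk u x
      cases p₁ with
      | nil => exact absurd h₁ (G'.irrefl)
      | @cons _ u' _ h' p' =>
        obtain ⟨z, r, h₂, hcat⟩ := SimpleGraph.Walk.exists_cons_eq_concat h' p'
        rw [hcat] at hcycc hsupp hedges hlenc
        -- now cycle is cons h₁ (r.concat h₂) : x, u, ..., z, x
        have hrpath : r.IsPath := by
          have hp : (r.concat h₂).IsPath :=
            ((SimpleGraph.Walk.cons_isCycle_iff _ _).mp hcycc).1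
          rw [SimpleGraph.Walk.concat_eq_append] at hp
          exact hp.of_append_left
        have hux : u ≠ x := fun h => (h ▸ h₁).ne rfl
        have hzx : z ≠ x := h₂.ne
        have hlenr : 2 ≤ r.length := by
          rw [SimpleGraph.Walk.length_cons, SimpleGraph.Walk.length_concat] at hlenc
          omega
        have huz : u ≠ z := by
          rintro rfl
          rw [(SimpleGraph.Walk.isPath_iff_eq_nil (p := r)).mp hrpath] at hlenr
          simp at hlenr
        have hGuz : G.Adj u z := hx (hle h₁) (hle h₂.symm) huz
        have hG'uz : G'.Adj u z := by
          rw [hG', SimpleGraph.deleteEdges_adj]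
          refine ⟨hGuz, ?_⟩
          simp only [Set.mem_singleton_iff, Sym2.eq_iff]
          rintro (⟨rfl, rfl⟩ | ⟨rfl, rfl⟩)
          · exact hux rfl
          · exact hzx rfl
        refine ⟨u, z, hG'uz, ?_, ?_, ?_⟩
        · have : u ∈ (SimpleGraph.Walk.cons h₁ (r.concat h₂)).support.tail := by
            simp
          exact List.mem_of_mem_tail (hsupp.mem_iff.mp this)
        · have : z ∈ (SimpleGraph.Walk.cons h₁ (r.concat h₂)).support.tail := by
            simp [SimpleGraph.Walk.support_concat]
          exact List.mem_of_mem_tail (hsupp.mem_iff.mp this)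
        · intro hmem
          have hmc : s(u, z) ∈ (SimpleGraph.Walk.cons h₁ (r.concat h₂)).edges :=
            hedges.mem_iff.mpr hmem
          simp only [SimpleGraph.Walk.edges_cons, SimpleGraph.Walk.edges_concat,
            List.concat_eq_append, List.mem_cons, List.mem_append, List.mem_singleton] at hmc
          rcases hmc with h9 | hmr | h9
          · rw [Sym2.eq_iff] at h9
            rcases h9 with ⟨h9, -⟩ | ⟨-, h9⟩
            · exact hux h9
            · exact hzx h9
          · -- s(u,z) ∈ r.edges, r a path from u to z
            cases r with
            | nil => simp at hmr
            | @cons _ w' _ h₃ r' =>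
              have hcons := (SimpleGraph.Walk.cons_isPath_iff h₃ r').mp hrpath
              rw [SimpleGraph.Walk.edges_cons, List.mem_cons] at hmr
              rcases hmr with h9 | hmr'
              · rw [Sym2.eq_iff] at h9
                rcases h9 with ⟨-, h9⟩ | ⟨h9, -⟩
                · subst h9
                  rw [(SimpleGraph.Walk.isPath_iff_eq_nil (p := r')).mp hcons.1] at hlenr
                  simp at hlenr
                · exact h₃.ne h9
              · exact hcons.2 (SimpleGraph.Walk.fst_mem_support_of_mem_edges r' hmr')
          · rw [Sym2.eq_iff] at h9
            rcases h9 with (⟨h8, -⟩ | ⟨h8, -⟩) | h7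
            · exact huz h8
            · exact hux h8
            · simp at h7
  · refine ⟨a, b, ?_, ha, hb, hnab⟩
    rw [hG', SimpleGraph.deleteEdges_adj]
    exact ⟨hab, by simpa using hxy⟩
end

section
/- Let G be a chordal graph, let P be a chordless (induced) path in G of length at least 3 with endpoints x and z, and let y be a vertex of G not on P that is adjacent to both x and z. Then y is adjacent to every vertex of P. -/
open scoped Classical

open SimpleGraph Walk

-- chord extraction for length ≥ 2
lemma chord_aux {V : Type*} {G : SimpleGraph V} (hchordal : G.IsChordal)
    {x z y : V} (P : G.Walk x z) (hpath : P.IsPath) (hlen : 2 ≤ P.length)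
    (hch : ∀ a b : V, a ∈ P.support → b ∈ P.support → G.Adj a b → s(a, b) ∈ P.edges)
    (hy : y ∉ P.support) (hyx : G.Adj y x) (hyz : G.Adj y z) :
    ∃ w ∈ P.support, w ≠ x ∧ w ≠ z ∧ G.Adj y w := by
  have hxz : x ≠ z := by
    rintro rfl
    have h0 : (⟨P, hpath⟩ : G.Path x x) = Path.nil := Path.loop_eq _
    have : P = Walk.nil := congrArg Subtype.val h0
    simp [this] at hlen
  -- the cycle y - x - ... - z - y
  set Q : G.Walk x y := P.concat hyz.symm with hQ
  have hQsupp : Q.support = P.support ++ [y] := by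
    simp [hQ, Walk.support_concat, List.concat_eq_append]
  have hQpath : Q.IsPath := by
    rw [Walk.isPath_def, hQsupp]
    simp [List.nodup_append, hpath.support_nodup, hy]
    intro a ha rfl; exact hy ha
  have hQedges : Q.edges = P.edges ++ [s(z, y)] := by
    simp [hQ, Walk.edges_concat, List.concat_eq_append]
  set C : G.Walk y y := Walk.cons hyx Q with hC
  have hCsupp : C.support = y :: (P.support ++ [y]) := by
    simp [hC, hQsupp]
  have hCedges : C.edges = s(y, x) :: (P.edges ++ [s(z, y)]) := by
    simp [hC, hQedges]
  have hCcyc : C.IsCycle := by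
    rw [hC, Walk.cons_isCycle_iff]
    refine ⟨hQpath, ?_⟩
    rw [hQedges]
    simp only [List.mem_append, List.mem_singleton]
    rintro (h | h)
    · exact hy (P.fst_mem_support_of_mem_edges h)
    · rw [Sym2.eq_iff] at h
      rcases h with ⟨rfl, rfl⟩ | ⟨_, h2⟩
      · exact hy P.end_mem_support
      · exact hxz h2
  have hClen : 3 < C.length := by
    have : C.length = P.length + 2 := by simp [hC, hQ]
    omega
  obtain ⟨a, b, hab, ha, hb, hnotin⟩ := hchordal C hCcyc hClen
  have hmem : ∀ c : V, c ∈ C.support → c = y ∨ c ∈ P.support := by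
    intro c hc
    rw [hCsupp] at hc
    simp at hc
    tauto
  have key : ∀ a b : V, G.Adj a b → s(a,b) ∉ C.edges → a = y → b ∈ P.support →
      ∃ w ∈ P.support, w ≠ x ∧ w ≠ z ∧ G.Adj y w := by
    rintro a b hab hnotin rfl hb
    refine ⟨b, hb, ?_, ?_, hab⟩
    · rintro rfl
      exact hnotin (by rw [hCedges]; simp)
    · rintro rfl
      refine hnotin (by rw [hCedges]; simp [Sym2.eq_iff])
  rcases hmem a ha with rfl | haP
  · rcases hmem b hb with rfl | hbP
    · exact absurd rfl hab.ne
    · exact key a b hab hnotin rfl hbP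
  · rcases hmem b hb with rfl | hbP
    · refine key b a hab.symm (by rwa [Sym2.eq_swap]) rfl haP
    · exact absurd (by rw [hCedges]; simp [hch a b haP hbP hab]) hnotin

lemma aux_main {V : Type*} {G : SimpleGraph V} (hchordal : G.IsChordal) :
    ∀ n : ℕ, ∀ (x z y : V) (P : G.Walk x z), P.length = n → P.IsPath →
      (∀ a b : V, a ∈ P.support → b ∈ P.support → G.Adj a b → s(a, b) ∈ P.edges) →
      y ∉ P.support → G.Adj y x → G.Adj y z → ∀ v ∈ P.support, G.Adj y v := by
  intro n
  induction n using Nat.strong_induction_on with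
  | _ n ih =>
  intro x z y P hlen hpath hch hy hyx hyz v hv
  classical
  cases P with
  | nil =>
    simp at hv; subst hv; exact hyx
  | cons h q =>
    cases q with
    | nil =>
      simp at hv
      rcases hv with rfl | rfl
      exacts [hyx, hyz]
    | cons h' q' =>
      set P : G.Walk x z := Walk.cons h (Walk.cons h' q') with hP
      have hlen2 : 2 ≤ P.length := by simp [hP]
      obtain ⟨w, hw, hwx, hwz, hyw⟩ :=
        chord_aux hchordal P hpath hlen2 hch hy hyx hyz
      set P1 := P.takeUntil w hw with hP1
      set P2 := P.dropUntil w hw with hP2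
      have hspec : P1.append P2 = P := P.take_spec hw
      have hsupp : P.support = P1.support ++ P2.support.tail := by
        rw [← hspec, Walk.support_append]
      have hedges : P.edges = P1.edges ++ P2.edges := by
        rw [← hspec, Walk.edges_append]
      have hlen12 : P1.length + P2.length = n := by
        rw [← hlen, ← hspec, Walk.length_append]
      have hP1pos : 0 < P1.length := by
        rcases Nat.eq_zero_or_pos P1.length with h0 | h0
        · exact absurd (Walk.eq_of_length_eq_zero h0) hwx.symm
        · exact h0
      have hP2pos : 0 < P2.length := by
        rcases Nat.eq_zero_or_pos P2.length with h0 | h0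
        · exact absurd (Walk.eq_of_length_eq_zero h0) hwz
        · exact h0
      have hP1path : P1.IsPath := hpath.takeUntil hw
      have hP2path : P2.IsPath := hpath.dropUntil hw
      have hdisj : ∀ c : V, c ∈ P1.support → c ∈ P2.support → c = w := by
        intro c hc1 hc2
        have hnd : (P1.support ++ P2.support.tail).Nodup := by
          rw [← hsupp]; exact hpath.support_nodup
        rw [P2.support_eq_cons, List.mem_cons] at hc2
        rcases hc2 with rfl | hc2
        · rfl
        · exact absurd hc2 (List.disjoint_of_nodup_append hnd hc1)
      have hsub1 : ∀ c : V, c ∈ P1.support → c ∈ P.support :=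
        fun c hc => Walk.support_takeUntil_subset P hw hc
      have hsub2 : ∀ c : V, c ∈ P2.support → c ∈ P.support :=
        fun c hc => Walk.support_dropUntil_subset P hw hc
      have hch1 : ∀ a b : V, a ∈ P1.support → b ∈ P1.support → G.Adj a b →
          s(a, b) ∈ P1.edges := by
        intro a b ha hb hab
        have := hch a b (hsub1 a ha) (hsub1 b hb) hab
        rw [hedges, List.mem_append] at this
        rcases this with h1 | h2
        · exact h1
        · have ha2 := hdisj a ha (Walk.fst_mem_support_of_mem_edges P2 h2)
          have hb2 := hdisj b hb (Walk.snd_mem_support_of_mem_edges P2 h2)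
          exact absurd (ha2.trans hb2.symm) hab.ne
      have hch2 : ∀ a b : V, a ∈ P2.support → b ∈ P2.support → G.Adj a b →
          s(a, b) ∈ P2.edges := by
        intro a b ha hb hab
        have := hch a b (hsub2 a ha) (hsub2 b hb) hab
        rw [hedges, List.mem_append] at this
        rcases this with h1 | h2
        · have ha2 := hdisj a (Walk.fst_mem_support_of_mem_edges P1 h1) ha
          have hb2 := hdisj b (Walk.snd_mem_support_of_mem_edges P1 h1) hb
          exact absurd (ha2.trans hb2.symm) hab.ne
        · exact h2
      have hy1 : y ∉ P1.support := fun hc => hy (hsub1 y hc)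
      have hy2 : y ∉ P2.support := fun hc => hy (hsub2 y hc)
      rw [hsupp, List.mem_append] at hv
      rcases hv with hv | hv
      · exact ih P1.length (by omega) x w y P1 rfl hP1path hch1 hy1 hyx hyw v hv
      · exact ih P2.length (by omega) w z y P2 rfl hP2path hch2 hy2 hyw hyz v
          (List.mem_of_mem_tail hv)

/-- Let `G` be a chordal graph, `P` a chordless (induced) path of length at least `3` with
endpoints `x` and `z`, and let `y` be a vertex not on `P` adjacent to both `x` and `z`.
Then `y` is adjacent to every vertex of `P`. -/
theorem stmt_4 {V : Type*} (G : SimpleGraph V) (x z y : V) (P : G.Walk x z)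
    (hchordal : G.IsChordal) (hpath : P.IsPath) (hlen : 3 ≤ P.length)
    (hchordless : ∀ a b : V, a ∈ P.support → b ∈ P.support → G.Adj a b → s(a, b) ∈ P.edges)
    (hy : y ∉ P.support) (hyx : G.Adj y x) (hyz : G.Adj y z) :
    ∀ v ∈ P.support, G.Adj y v :=
  aux_main hchordal P.length x z y P rfl hpath hchordless hy hyx hyz
end

section
/- Let n and k be positive integers with n ≥ k+1, and write n = q(k+1) + r where q and r are the unique integers with 0 ≤ r ≤ k. Then there exists a chordal graph of order n and minimum degree k whose number of edges equals q·binomial(k+1,2) + kr − r(r−1)/2. -/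
open scoped Classical

set_option maxHeartbeats 1000000

section AuxLemmas

variable {V : Type*} {G : SimpleGraph V}

lemma aux_getVert_mem_support {u v : V} (p : G.Walk u v) (i : ℕ) :
    p.getVert i ∈ p.support := by
  induction p generalizing i with
  | nil =>
    rw [SimpleGraph.Walk.getVert_of_length_le _ (by simp)]
    simp
  | cons h p ih =>
    cases i with
    | zero =>
      rw [SimpleGraph.Walk.getVert_zero]
      exact SimpleGraph.Walk.start_mem_support _
    | succ m =>
      rw [SimpleGraph.Walk.getVert_cons_succ, SimpleGraph.Walk.support_cons]
      exact List.mem_cons_of_mem _ (ih m)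

lemma aux_support_getElem {u v : V} (p : G.Walk u v) (i : ℕ) (h : i < p.support.length) :
    p.support[i] = p.getVert i := by
  induction p generalizing i with
  | nil =>
    have hi : i = 0 := by simpa using Nat.lt_one_iff.mp (by simpa using h)
    subst hi
    simp [SimpleGraph.Walk.getVert_zero]
  | cons ha p ih =>
    cases i with
    | zero => simp [SimpleGraph.Walk.support_cons, SimpleGraph.Walk.getVert_zero]
    | succ m =>
      have h' : m < p.support.length := by
        have := h
        rw [SimpleGraph.Walk.support_cons] at this
        simpa using this
      simp only [SimpleGraph.Walk.support_cons, List.getElem_cons_succ,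
        SimpleGraph.Walk.getVert_cons_succ]
      exact ih m h'

lemma aux_cycle_getVert_inj {x : V} {p : G.Walk x x} (hp : p.IsCycle) {i j : ℕ}
    (hi1 : 1 ≤ i) (hi2 : i ≤ p.length) (hj1 : 1 ≤ j) (hj2 : j ≤ p.length)
    (h : p.getVert i = p.getVert j) : i = j := by
  obtain ⟨i, rfl⟩ : ∃ i', i = i' + 1 := ⟨i - 1, by omega⟩
  obtain ⟨j, rfl⟩ : ∃ j', j = j' + 1 := ⟨j - 1, by omega⟩
  have hls := p.length_support
  have hlt : p.support.tail.length = p.length := by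
    rw [List.length_tail, hls]
    omega
  have hi : i < p.support.tail.length := by omega
  have hj : j < p.support.tail.length := by omega
  have e1 : p.support.tail[i] = p.getVert (i + 1) := by
    rw [List.getElem_tail]
    exact aux_support_getElem p (i + 1) (by omega)
  have e2 : p.support.tail[j] = p.getVert (j + 1) := by
    rw [List.getElem_tail]
    exact aux_support_getElem p (j + 1) (by omega)
  have h' : p.support.tail[i] = p.support.tail[j] := by rw [e1, e2, h]
  have := (hp.support_nodup.getElem_inj_iff).1 h'
  omega

lemma aux_mem_edges {u v a b : V} (p : G.Walk u v) (h : s(a, b) ∈ p.edges) :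
    ∃ i, i < p.length ∧ ((p.getVert i = a ∧ p.getVert (i + 1) = b) ∨
      (p.getVert i = b ∧ p.getVert (i + 1) = a)) := by
  induction p with
  | nil => simp at h
  | cons ha p ih =>
    rw [SimpleGraph.Walk.edges_cons, List.mem_cons] at h
    rcases h with h | h
    · refine ⟨0, by simp, ?_⟩
      rw [Sym2.eq_iff] at h
      rcases h with ⟨rfl, rfl⟩ | ⟨rfl, rfl⟩
      · left
        exact ⟨SimpleGraph.Walk.getVert_zero _,
          by rw [SimpleGraph.Walk.getVert_cons_succ, SimpleGraph.Walk.getVert_zero]⟩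
      · right
        exact ⟨SimpleGraph.Walk.getVert_zero _,
          by rw [SimpleGraph.Walk.getVert_cons_succ, SimpleGraph.Walk.getVert_zero]⟩
    · obtain ⟨i, hi, hc⟩ := ih h
      refine ⟨i + 1, by rw [SimpleGraph.Walk.length_cons]; omega, ?_⟩
      simpa [SimpleGraph.Walk.getVert_cons_succ] using hc

lemma aux_card_filter (n a b : ℕ) (hb : b ≤ n) :
    (Finset.univ.filter (fun i : Fin n => a ≤ i.val ∧ i.val < b)).card = b - a := by
  rw [← Nat.card_Ico a b]
  apply Finset.card_bij (fun (i : Fin n) _ => i.val)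
  · intro i hi
    simp only [Finset.mem_filter, Finset.mem_univ, true_and] at hi
    rw [Finset.mem_Ico]
    exact hi
  · intro i _ j _ hij
    exact Fin.ext hij
  · intro y hy
    rw [Finset.mem_Ico] at hy
    exact ⟨⟨y, by omega⟩, by simp [hy.1, hy.2], rfl⟩

end AuxLemmas

/-- Let `n = q(k+1) + r` with `0 ≤ r ≤ k` and `n ≥ k+1`, `n, k ≥ 1`. There exists a chordal
graph of order `n` and minimum degree `k` with exactly
`q * C(k+1, 2) + k * r - r * (r-1) / 2` edges. -/
theorem stmt_7 (n k q r : ℕ) (hn : 0 < n) (hk : 0 < k) (hnk : k + 1 ≤ n)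
    (hqr : n = q * (k + 1) + r) (hr : r ≤ k) :
    ∃ G : SimpleGraph (Fin n), G.IsChordal ∧ G.minDegree = k ∧
      G.edgeFinset.card = q * Nat.choose (k + 1) 2 + k * r - r * (r - 1) / 2 := by
  obtain ⟨q', rfl⟩ : ∃ q'', q = q'' + 1 := by
    refine ⟨q - 1, ?_⟩
    rcases q with _ | t
    · omega
    · omega
  -- division characterization
  have hdivle : ∀ x : ℕ, x / (k + 1) * (k + 1) ≤ x := fun x => Nat.div_mul_le_self x (k + 1)
  have hdivlt : ∀ x : ℕ, x < (x / (k + 1) + 1) * (k + 1) := by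
    intro x
    calc x = (k + 1) * (x / (k + 1)) + x % (k + 1) := (Nat.div_add_mod x (k + 1)).symm
      _ < (k + 1) * (x / (k + 1)) + (k + 1) :=
          Nat.add_lt_add_left (Nat.mod_lt x (Nat.succ_pos k)) _
      _ = (x / (k + 1) + 1) * (k + 1) := by ring
  have hdiv : ∀ (x j : ℕ), x / (k + 1) = j ↔ (j * (k + 1) ≤ x ∧ x < (j + 1) * (k + 1)) := by
    intro x j
    constructor
    · rintro rfl
      exact ⟨hdivle x, hdivlt x⟩
    · rintro ⟨h1, h2⟩
      exact Nat.div_eq_of_lt_le h1 h2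
  have hblock : ∀ x : ℕ, ∃ P, P ≤ x ∧ x < P + (k + 1) ∧
      ∀ y : ℕ, (y / (k + 1) = x / (k + 1) ↔ P ≤ y ∧ y < P + (k + 1)) := by
    intro x
    have h3 : (x / (k + 1) + 1) * (k + 1) = x / (k + 1) * (k + 1) + (k + 1) := by ring
    refine ⟨x / (k + 1) * (k + 1), hdivle x, h3 ▸ hdivlt x, ?_⟩
    intro y
    constructor
    · intro hy
      have := (hdiv y (x / (k + 1))).1 hy
      exact ⟨this.1, h3 ▸ this.2⟩
    · intro hy
      exact (hdiv y (x / (k + 1))).2 ⟨hy.1, h3 ▸ hy.2⟩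
  obtain ⟨Q, hQn, hbq, hbq1⟩ : ∃ Q, n = Q + (k + 1) + r ∧
      (∀ y : ℕ, y / (k + 1) = q' ↔ Q ≤ y ∧ y < Q + (k + 1)) ∧
      (∀ y : ℕ, y / (k + 1) = q' + 1 ↔ Q + (k + 1) ≤ y ∧ y < Q + (k + 1) + (k + 1)) := by
    have e1 : (q' + 1) * (k + 1) = q' * (k + 1) + (k + 1) := by ring
    have e2 : (q' + 1 + 1) * (k + 1) = q' * (k + 1) + (k + 1) + (k + 1) := by ring
    refine ⟨q' * (k + 1), by rw [hqr]; ring, ?_, ?_⟩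
    · intro y
      rw [hdiv y q', e1]
    · intro y
      rw [hdiv y (q' + 1), e1, e2]
  -- the graph
  have hsymm : Symmetric (fun u v : Fin n => u ≠ v ∧
      (u.val / (k + 1) = v.val / (k + 1) ∨ (n - (k + 1) ≤ u.val ∧ n - (k + 1) ≤ v.val))) := by
    intro u v h
    refine ⟨h.1.symm, ?_⟩
    rcases h.2 with h2 | h2
    · exact Or.inl h2.symm
    · exact Or.inr ⟨h2.2, h2.1⟩
  set G : SimpleGraph (Fin n) :=
    ⟨fun u v => u ≠ v ∧
      (u.val / (k + 1) = v.val / (k + 1) ∨ (n - (k + 1) ≤ u.val ∧ n - (k + 1) ≤ v.val)),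
     ⟨fun _ _ h => hsymm h⟩, ⟨fun u h => h.1 rfl⟩⟩ with hGdef
  have hAdj : ∀ u v : Fin n, G.Adj u v ↔ (u ≠ v ∧
      (u.val / (k + 1) = v.val / (k + 1) ∨ (n - (k + 1) ≤ u.val ∧ n - (k + 1) ≤ v.val))) :=
    fun u v => Iff.rfl
  -- degree counting
  have hcount : ∀ (v : Fin n) (a b : ℕ), b ≤ n → a ≤ v.val → v.val < b →
      (∀ u : Fin n, G.Adj v u ↔ (u ≠ v ∧ (a ≤ u.val ∧ u.val < b))) →
      G.degree v = b - a - 1 := by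
    intro v a b hb ha hv hiff
    have hset : G.neighborFinset v =
        (Finset.univ.filter (fun u : Fin n => a ≤ u.val ∧ u.val < b)).erase v := by
      ext u
      rw [SimpleGraph.mem_neighborFinset, hiff u, Finset.mem_erase, Finset.mem_filter]
      constructor
      · rintro ⟨h1, h2⟩
        exact ⟨h1, Finset.mem_univ u, h2⟩
      · rintro ⟨h1, _, h2⟩
        exact ⟨h1, h2⟩
    rw [← SimpleGraph.card_neighborFinset_eq_degree, hset,
      Finset.card_erase_of_mem (by simp only [Finset.mem_filter, Finset.mem_univ, true_and]; exact ⟨ha, hv⟩),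
      aux_card_filter n a b hb]
  have hdeg : ∀ v : Fin n, G.degree v =
      if n - (k + 1) ≤ v.val ∧ v.val < n - r then k + r else k := by
    intro v
    by_cases h1 : v.val < n - (k + 1)
    · rw [if_neg (by omega)]
      obtain ⟨P, hP1, hP2, hP3⟩ := hblock v.val
      have hble : P + (k + 1) ≤ n := by omega
      rw [hcount v P (P + (k + 1)) hble hP1 hP2 ?_]
      · omega
      intro u
      rw [hAdj]
      constructor
      · rintro ⟨hne, hcs | hE⟩
        · exact ⟨hne.symm, (hP3 u.val).1 hcs.symm⟩
        · exfalso; omega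
      · rintro ⟨hne, hu1, hu2⟩
        exact ⟨hne.symm, Or.inl ((hP3 u.val).2 ⟨hu1, hu2⟩).symm⟩
    · by_cases h2 : v.val < n - r
      · -- middle range
        rw [if_pos (by omega)]
        have hvq : v.val / (k + 1) = q' := (hbq v.val).2 ⟨by omega, by omega⟩
        rw [hcount v Q n le_rfl (by omega) v.isLt ?_]
        · omega
        intro u
        rw [hAdj]
        constructor
        · rintro ⟨hne, hcs | hE⟩
          · have : u.val / (k + 1) = q' := by rw [← hcs, hvq]
            have := (hbq u.val).1 this
            exact ⟨hne.symm, by omega, u.isLt⟩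
          · exact ⟨hne.symm, by omega, u.isLt⟩
        · rintro ⟨hne, hu1, _⟩
          refine ⟨hne.symm, ?_⟩
          by_cases hE : n - (k + 1) ≤ u.val
          · exact Or.inr ⟨by omega, hE⟩
          · have : u.val / (k + 1) = q' := (hbq u.val).2 ⟨by omega, by omega⟩
            exact Or.inl (by rw [hvq, this])
      · -- extras
        rw [if_neg (by omega)]
        have hvq : v.val / (k + 1) = q' + 1 := (hbq1 v.val).2 ⟨by omega, by omega⟩
        rw [hcount v (n - (k + 1)) n le_rfl (by omega) v.isLt ?_]
        · omega
        intro u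
        rw [hAdj]
        constructor
        · rintro ⟨hne, hcs | hE⟩
          · have : u.val / (k + 1) = q' + 1 := by rw [← hcs, hvq]
            have := (hbq1 u.val).1 this
            exact ⟨hne.symm, by omega, u.isLt⟩
          · exact ⟨hne.symm, hE.2, u.isLt⟩
        · rintro ⟨hne, hu1, _⟩
          exact ⟨hne.symm, Or.inr ⟨by omega, hu1⟩⟩
  -- simplicial vertices
  have hsimp : ∀ x u z : Fin n, ¬ (n - (k + 1) ≤ x.val ∧ x.val < n - r) →
      G.Adj x u → G.Adj x z → u ≠ z → G.Adj u z := by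
    intro x u z hx hxu hxz huz
    rw [hAdj] at hxu hxz ⊢
    obtain ⟨hxu1, hxu2⟩ := hxu
    obtain ⟨hxz1, hxz2⟩ := hxz
    refine ⟨huz, ?_⟩
    by_cases hlow : x.val < n - (k + 1)
    · have h2 : x.val / (k + 1) = u.val / (k + 1) := by
        rcases hxu2 with h | h
        · exact h
        · exfalso; omega
      have h3 : x.val / (k + 1) = z.val / (k + 1) := by
        rcases hxz2 with h | h
        · exact h
        · exfalso; omega
      exact Or.inl (h2.symm.trans h3)
    · have hxE : n - r ≤ x.val := by omega
      have hxq : x.val / (k + 1) = q' + 1 := (hbq1 x.val).2 ⟨by omega, by omega⟩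
      have hu : n - (k + 1) ≤ u.val := by
        rcases hxu2 with h | h
        · have : u.val / (k + 1) = q' + 1 := by rw [← h, hxq]
          have := (hbq1 u.val).1 this
          omega
        · exact h.2
      have hz : n - (k + 1) ≤ z.val := by
        rcases hxz2 with h | h
        · have : z.val / (k + 1) = q' + 1 := by rw [← h, hxq]
          have := (hbq1 z.val).1 this
          omega
        · exact h.2
      exact Or.inr ⟨hu, hz⟩
  refine ⟨G, ?_, ?_, ?_⟩
  · -- chordality
    intro v w hw hlen
    by_cases hall : ∀ x ∈ w.support, n - (k + 1) ≤ x.val ∧ x.val < n - r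
    · -- all vertices in the "S" region: they form a clique
      obtain ⟨b, hb⟩ : ∃ b, b = w.getVert 2 := ⟨_, rfl⟩
      have hvs : v ∈ w.support := w.start_mem_support
      have hbs : b ∈ w.support := hb ▸ aux_getVert_mem_support w 2
      have hVl : w.getVert w.length = v := w.getVert_length
      have hne : v ≠ b := by
        intro hcon
        have : w.length = 2 := aux_cycle_getVert_inj hw (by omega) le_rfl (by omega) (by omega)
          (by rw [hVl]; exact hcon.trans hb)
        omega
      have hadj : G.Adj v b := by
        rw [hAdj]
        exact ⟨hne, Or.inr ⟨(hall v hvs).1, (hall b hbs).1⟩⟩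
      refine ⟨v, b, hadj, hvs, hbs, ?_⟩
      intro hmem
      obtain ⟨i, hi, hcase⟩ := aux_mem_edges w hmem
      rcases hcase with ⟨hiv, hib⟩ | ⟨hib, hiv⟩
      · rcases Nat.eq_zero_or_pos i with h0 | h0
        · subst h0
          have hib' : w.getVert 1 = b := hib
          have := aux_cycle_getVert_inj hw (i := 1) (j := 2) (by omega) (by omega) (by omega)
            (by omega) (by rw [hib', hb])
          omega
        · have := aux_cycle_getVert_inj hw (i := i) (j := w.length) (by omega) (by omega)
            (by omega) le_rfl (by rw [hiv, hVl])
          omega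
      · rcases Nat.eq_zero_or_pos i with h0 | h0
        · subst h0
          have hib' : w.getVert 0 = b := hib
          rw [w.getVert_zero] at hib'
          exact hne hib'
        · have h2 := aux_cycle_getVert_inj hw (i := i) (j := 2) (by omega) (by omega) (by omega)
            (by omega) (by rw [hib, hb])
          have h3 := aux_cycle_getVert_inj hw (i := i + 1) (j := w.length) (by omega) (by omega)
            (by omega) le_rfl (by rw [hiv, hVl])
          omega
    · -- a simplicial vertex exists on the cycle
      push_neg at hall
      obtain ⟨x, hxs, hx⟩ := hall
      have hx' : ¬ (n - (k + 1) ≤ x.val ∧ x.val < n - r) := by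
        intro hcon
        exact absurd hcon.2 (by omega)
      set w' := w.rotate x hxs with hw'def
      have hc' : w'.IsCycle := hw.rotate hxs
      have hlen' : w'.length = w.length := by
        have h1 := (w.rotate_edges x hxs).perm.length_eq
        rw [SimpleGraph.Walk.length_edges, SimpleGraph.Walk.length_edges] at h1
        exact h1
      obtain ⟨L, hL⟩ : ∃ L, L = w.length := ⟨_, rfl⟩
      have hLge : 3 < L := by omega
      have hwL : w'.length = L := by rw [hlen', hL]
      obtain ⟨u, hu⟩ : ∃ u, u = w'.getVert 1 := ⟨_, rfl⟩
      obtain ⟨z, hz⟩ : ∃ z, z = w'.getVert (L - 1) := ⟨_, rfl⟩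
      have h0 : w'.getVert 0 = x := w'.getVert_zero
      have hLx : w'.getVert L = x := by
        have := w'.getVert_length
        rwa [hwL] at this
      have inj' : ∀ i j, 1 ≤ i → i ≤ L → 1 ≤ j → j ≤ L →
          w'.getVert i = w'.getVert j → i = j := by
        intro i j a1 a2 a3 a4 a5
        exact aux_cycle_getVert_inj hc' a1 (by omega) a3 (by omega) a5
      have hadjxu : G.Adj x u := by
        have := w'.adj_getVert_succ (i := 0) (by omega)
        rw [h0] at this
        rw [hu]
        exact this
      have hadjxz : G.Adj x z := by
        have := w'.adj_getVert_succ (i := L - 1) (by omega)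
        have he : L - 1 + 1 = L := by omega
        rw [he, hLx] at this
        rw [hz]
        exact this.symm
      have huz : u ≠ z := by
        intro hcon
        have := inj' 1 (L - 1) (by omega) (by omega) (by omega) (by omega)
          (by rw [← hu, ← hz, hcon])
        omega
      have hadjuz : G.Adj u z := hsimp x u z hx' hadjxu hadjxz huz
      have hxu : u ≠ x := by
        intro hcon
        have := inj' 1 L (by omega) (by omega) (by omega) le_rfl
          (by rw [← hu, hcon, hLx])
        omega
      have hxz : z ≠ x := by
        intro hcon
        have := inj' (L - 1) L (by omega) (by omega) (by omega) le_rfl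
          (by rw [← hz, hcon, hLx])
        omega
      have hmemtr : ∀ y : Fin n, y ∈ w'.support → y ∈ w.support := by
        intro y hy
        rw [SimpleGraph.Walk.support_eq_cons] at hy
        rcases List.mem_cons.1 hy with rfl | hy
        · exact hxs
        · have := (w.support_rotate x hxs).mem_iff.1 hy
          rw [SimpleGraph.Walk.support_eq_cons]
          exact List.mem_cons_of_mem _ this
      refine ⟨u, z, hadjuz, hmemtr u (hu ▸ aux_getVert_mem_support w' 1),
        hmemtr z (hz ▸ aux_getVert_mem_support w' (L - 1)), ?_⟩
      intro hedge
      have hedge' : s(u, z) ∈ w'.edges := (w.rotate_edges x hxs).mem_iff.2 hedge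
      obtain ⟨i, hi, hcase⟩ := aux_mem_edges w' hedge'
      have hiL : i < L := by omega
      rcases hcase with ⟨ha1, ha2⟩ | ⟨ha1, ha2⟩
      · rcases Nat.eq_zero_or_pos i with h0' | h0'
        · apply hxu
          subst h0'
          rw [h0] at ha1
          exact ha1.symm
        · have e1 := inj' i 1 (by omega) (by omega) (by omega) (by omega) (by rw [ha1, hu])
          have e2 := inj' (i + 1) (L - 1) (by omega) (by omega) (by omega) (by omega)
            (by rw [ha2, hz])
          omega
      · rcases Nat.eq_zero_or_pos i with h0' | h0'
        · apply hxz
          subst h0'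
          rw [h0] at ha1
          exact ha1.symm
        · have e1 := inj' i (L - 1) (by omega) (by omega) (by omega) (by omega)
            (by rw [ha1, hz])
          have e2 := inj' (i + 1) 1 (by omega) (by omega) (by omega) (by omega)
            (by rw [ha2, hu])
          omega
  · -- minimum degree
    haveI : Nonempty (Fin n) := ⟨⟨0, hn⟩⟩
    have hdegbound : ∀ v : Fin n, k ≤ G.degree v := by
      intro v
      rw [hdeg v]
      split_ifs <;> omega
    have hwdeg : G.degree ⟨n - 1, by omega⟩ = k := by
      rw [hdeg]
      split_ifs with h
      · simp only at h
        omega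
      · rfl
    have hdeg_eq : ∀ (v : Fin n) (h1 h2 : Fintype (G.neighborSet v)),
        @SimpleGraph.degree _ G v h1 = @SimpleGraph.degree _ G v h2 := by
      intro v h1 h2
      rw [Subsingleton.elim h1 h2]
    have key : ∀ (inst : DecidableRel G.Adj),
        @SimpleGraph.minDegree (Fin n) G (Fin.fintype n) inst = k := by
      intro inst
      refine le_antisymm ?_
        (@SimpleGraph.le_minDegree_of_forall_le_degree (Fin n) G (Fin.fintype n) inst _ k
          (fun v => le_trans (hdegbound v) (le_of_eq (hdeg_eq v _ _))))
      refine le_trans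
        (@SimpleGraph.minDegree_le_degree (Fin n) G (Fin.fintype n) inst ⟨n - 1, by omega⟩) ?_
      exact le_of_eq ((hdeg_eq _ _ _).trans hwdeg)
    exact key _
  · -- edge count
    have hsum : ∑ v : Fin n, G.degree v = n * k + r * (k + 1 - r) := by
      have h1 : ∀ v : Fin n, G.degree v =
          k + (if n - (k + 1) ≤ v.val ∧ v.val < n - r then r else 0) := by
        intro v
        rw [hdeg v]
        split_ifs <;> omega
      calc ∑ v : Fin n, G.degree v
          = ∑ v : Fin n, (k + if n - (k + 1) ≤ v.val ∧ v.val < n - r then r else 0) :=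
            Finset.sum_congr rfl (fun v _ => h1 v)
        _ = n * k + r * (k + 1 - r) := by
            rw [Finset.sum_add_distrib, Finset.sum_const, Finset.card_univ, Fintype.card_fin,
              smul_eq_mul]
            congr 1
            rw [Finset.sum_ite, Finset.sum_const, Finset.sum_const_zero, add_zero, smul_eq_mul,
              aux_card_filter n (n - (k + 1)) (n - r) (by omega), mul_comm]
            congr 1
            omega
    have h2E : 2 * G.edgeFinset.card = n * k + r * (k + 1 - r) := by
      rw [← G.sum_degrees_eq_twice_card_edges, hsum]
    obtain ⟨c, hc⟩ := Nat.even_mul_succ_self k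
    obtain ⟨d, hd⟩ := Nat.even_mul_pred_self r
    have hchoose : Nat.choose (k + 1) 2 = c := by
      rw [Nat.choose_two_right]
      have h1 : (k + 1) * (k + 1 - 1) = 2 * c := by
        have h2 : k + 1 - 1 = k := rfl
        rw [h2]
        linarith [hc]
      rw [h1]
      exact Nat.mul_div_cancel_left c (by norm_num)
    have hhalf : r * (r - 1) / 2 = d := by
      rw [hd]
      omega
    rw [hchoose, hhalf]
    have hr1 : r * (k + 1 - r) + r * (r - 1) = r * k := by
      rcases Nat.eq_zero_or_pos r with h | h
      · rw [h]; simp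
      · rw [← Nat.mul_add]
        congr 1
        omega
    have h1 : n * k = 2 * ((q' + 1) * c) + r * k := by
      have e1 : n * k = (q' + 1) * (k * (k + 1)) + r * k := by rw [hqr]; ring
      rw [e1, hc]
      ring
    have hEd : G.edgeFinset.card + d = (q' + 1) * c + k * r := by
      linarith [h2E, hd, hr1, h1]
    have hcard_eq : ∀ (h1 h2 : Fintype G.edgeSet),
        (@SimpleGraph.edgeFinset _ G h1).card = (@SimpleGraph.edgeFinset _ G h2).card := by
      intro h1 h2
      rw [Subsingleton.elim h1 h2]
    rw [hcard_eq _ inferInstance]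
    exact Nat.eq_sub_of_add_eq hEd
end

section
/- Let k and r be integers with k ≥ 1 and 1 ≤ r ≤ k, and let n = k + 1 + r. Then the graph K_{k−r+1} ∨ (K_r + K_r), the join of a complete graph on k−r+1 vertices with the disjoint union of two complete graphs on r vertices each, is a chordal graph of order n and minimum degree k whose number of edges equals binomial(k+1,2) + kr − r(r−1)/2. -/
open scoped Classical

/-- The join `G ∨ H` of two vertex-disjoint graphs: their disjoint union together with all
edges joining a vertex of `G` and a vertex of `H`. -/
def SimpleGraph.join {α β : Type*} (G : SimpleGraph α) (H : SimpleGraph β) :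
    SimpleGraph (α ⊕ β) where
  Adj u v := match u, v with
    | Sum.inl u, Sum.inl v => G.Adj u v
    | Sum.inr u, Sum.inr v => H.Adj u v
    | _, _ => True
  symm := ⟨fun u v => match u, v with
    | Sum.inl _, Sum.inl _ => fun h => G.adj_symm h
    | Sum.inr _, Sum.inr _ => fun h => H.adj_symm h
    | Sum.inl _, Sum.inr _ | Sum.inr _, Sum.inl _ => fun _ => trivial⟩
  loopless := ⟨fun u => by rcases u with u | u <;> exact fun h => (SimpleGraph.irrefl _) h⟩

open SimpleGraph in
private lemma walk_support_eq' {V : Type*} {G : SimpleGraph V} {u v : V} (w : G.Walk u v) :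
    w.support = (List.range (w.length + 1)).map w.getVert := by
  induction w with
  | nil => simp [SimpleGraph.Walk.getVert]
  | cons h p ih =>
    rw [Walk.support_cons, Walk.length_cons, List.range_succ_eq_map, List.map_cons,
      List.map_map, ih]
    rfl

open SimpleGraph in
private lemma cycle_getVert_inj' {V : Type*} {G : SimpleGraph V} {v : V} {w : G.Walk v v}
    (hc : w.IsCycle) {i j : ℕ} (hi1 : 1 ≤ i) (hi2 : i ≤ w.length) (hj1 : 1 ≤ j)
    (hj2 : j ≤ w.length) (h : w.getVert i = w.getVert j) : i = j := by
  have hnd := hc.support_nodup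
  rw [walk_support_eq', List.range_succ_eq_map, List.map_cons, List.tail_cons,
    List.map_map] at hnd
  have key := (List.nodup_map_iff_inj_on List.nodup_range).mp hnd (i - 1) (by simp; omega)
    (j - 1) (by simp; omega) ?_
  · omega
  · show w.getVert (i - 1 + 1) = w.getVert (j - 1 + 1)
    rw [Nat.sub_add_cancel hi1, Nat.sub_add_cancel hj1]; exact h

open SimpleGraph in
private lemma walk_edge_index' {V : Type*} {G : SimpleGraph V} {a b : V} :
    ∀ {u v : V} (w : G.Walk u v), s(a, b) ∈ w.edges → ∃ i, i < w.length ∧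
      ((w.getVert i = a ∧ w.getVert (i + 1) = b) ∨
        (w.getVert i = b ∧ w.getVert (i + 1) = a)) := by
  intro u v w
  induction w with
  | nil => simp
  | @cons u x v h p ih =>
    intro hmem
    rw [Walk.edges_cons, List.mem_cons] at hmem
    rcases hmem with heq | hmem
    · refine ⟨0, by simp, ?_⟩
      rw [Sym2.eq_iff] at heq
      rcases heq with ⟨ha, hb⟩ | ⟨ha, hb⟩
      · exact Or.inl ⟨by simp [ha], by rw [Walk.getVert_cons_succ, Walk.getVert_zero]; exact hb.symm⟩
      · exact Or.inr ⟨by simp [hb], by rw [Walk.getVert_cons_succ, Walk.getVert_zero]; exact ha.symm⟩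
    · obtain ⟨i, hi, hcase⟩ := ih hmem
      exact ⟨i + 1, by simp; omega, by simpa [Walk.getVert_cons_succ] using hcase⟩

open SimpleGraph in
/-- Any graph in which every common neighbor of a non-adjacent pair is adjacent to all other
vertices is chordal. -/
private lemma isChordal_of_universal {V : Type*} {G : SimpleGraph V}
    (hU : ∀ x y z : V, x ≠ y → ¬ G.Adj x y → G.Adj z x → G.Adj z y →
      ∀ t : V, z ≠ t → G.Adj z t) : G.IsChordal := by
  intro v w hc hl
  have hmem : ∀ i : ℕ, i ≤ w.length → w.getVert i ∈ w.support := by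
    intro i hi
    rw [walk_support_eq']
    exact List.mem_map_of_mem (List.mem_range.mpr (by omega))
  have hv0 : w.getVert 0 = v := w.getVert_zero
  have hvL : w.getVert w.length = v := w.getVert_length
  have inj : ∀ {i j : ℕ}, 1 ≤ i → i ≤ w.length → 1 ≤ j → j ≤ w.length →
      w.getVert i = w.getVert j → i = j :=
    fun hi1 hi2 hj1 hj2 h => cycle_getVert_inj' hc hi1 hi2 hj1 hj2 h
  have hvj : ∀ j : ℕ, 1 ≤ j → j ≤ w.length → w.getVert j = v → j = w.length := by
    intro j hj1 hj2 hj
    exact inj hj1 hj2 (by omega) (le_refl _) (by rw [hj, hvL])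
  have h01 : G.Adj v (w.getVert 1) := by
    have := w.adj_getVert_succ (i := 0) (by omega); rwa [hv0] at this
  have h12 : G.Adj (w.getVert 1) (w.getVert 2) := w.adj_getVert_succ (by omega)
  have hne02 : v ≠ w.getVert 2 := by
    intro h
    have := hvj 2 (by omega) (by omega) h.symm; omega
  have hne13 : w.getVert 1 ≠ w.getVert 3 := by
    intro h
    have := inj (by omega) (by omega) (by omega) (by omega) h; omega
  have hchord02 : s(v, w.getVert 2) ∉ w.edges := by
    intro hmem'
    obtain ⟨i, hi, hca⟩ := walk_edge_index' w hmem'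
    rcases hca with ⟨h1, h2⟩ | ⟨h1, h2⟩
    · rcases Nat.eq_zero_or_pos i with hi0 | hi0
      · subst hi0
        have := inj (i := 1) (j := 2) (by omega) (by omega) (by omega) (by omega) h2
        omega
      · have := hvj i hi0 (by omega) h1; omega
    · rcases Nat.eq_zero_or_pos i with hi0 | hi0
      · subst hi0; exact hne02 (hv0.symm.trans h1)
      · have hi2 : i = 2 := inj hi0 (by omega) (by omega) (by omega) h1
        subst hi2
        have := hvj 3 (by omega) (by omega) h2; omega
  have hchord13 : s(w.getVert 1, w.getVert 3) ∉ w.edges := by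
    intro hmem'
    obtain ⟨i, hi, hca⟩ := walk_edge_index' w hmem'
    rcases hca with ⟨h1, h2⟩ | ⟨h1, h2⟩
    · rcases Nat.eq_zero_or_pos i with hi0 | hi0
      · subst hi0
        have h1' : w.getVert 1 = v := h1.symm.trans hv0
        have := hvj 1 (by omega) (by omega) h1'; omega
      · have hi1 : i = 1 := inj hi0 (by omega) (by omega) (by omega) h1
        subst hi1
        have := inj (i := 2) (j := 3) (by omega) (by omega) (by omega) (by omega) h2
        omega
    · rcases Nat.eq_zero_or_pos i with hi0 | hi0
      · subst hi0
        have h1' : w.getVert 3 = v := h1.symm.trans hv0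
        have := hvj 3 (by omega) (by omega) h1'; omega
      · have hi3 : i = 3 := inj hi0 (by omega) (by omega) (by omega) h1
        subst hi3
        have := inj (i := 4) (j := 1) (by omega) (by omega) (by omega) (by omega) h2
        omega
  by_cases h02 : G.Adj v (w.getVert 2)
  · exact ⟨_, _, h02, w.start_mem_support, hmem 2 (by omega), hchord02⟩
  · have h13 : G.Adj (w.getVert 1) (w.getVert 3) :=
      hU v (w.getVert 2) (w.getVert 1) hne02 h02 h01.symm h12 _ hne13
    exact ⟨_, _, h13, hmem 1 (by omega), hmem 3 (by omega), hchord13⟩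

private lemma Gadj_iff (k r : ℕ) : ∀ u v : Fin (k - r + 1) ⊕ (Fin r ⊕ Fin r),
    (SimpleGraph.join (⊤ : SimpleGraph (Fin (k - r + 1)))
        ((⊤ : SimpleGraph (Fin r)) ⊕g (⊤ : SimpleGraph (Fin r)))).Adj u v ↔
      u ≠ v ∧ ¬ ((∃ a b, u = Sum.inr (Sum.inl a) ∧ v = Sum.inr (Sum.inr b)) ∨
                  (∃ a b, u = Sum.inr (Sum.inr a) ∧ v = Sum.inr (Sum.inl b))) := by
  rintro (c | a | a) (d | b | b) <;>
    simp [SimpleGraph.join, SimpleGraph.sum_adj, SimpleGraph.top_adj]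

private lemma arith_aux (k r E : ℕ) (hr1 : 1 ≤ r) (hrk : r ≤ k)
    (h : (k - r + 1) * (k + r) + (k * r + k * r) = 2 * E) :
    E = (k + 1).choose 2 + k * r - r * (r - 1) / 2 := by
  rw [Nat.choose_two_right, Nat.add_sub_cancel]
  have e1 : 2 * ((k + 1) * k / 2) = (k + 1) * k := by
    rw [Nat.two_mul_div_two_of_even]
    simpa [Nat.mul_comm] using Nat.even_mul_succ_self k
  have e2 : 2 * (r * (r - 1) / 2) = r * (r - 1) := by
    rw [Nat.two_mul_div_two_of_even]
    have h3 := Nat.even_mul_succ_self (r - 1)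
    have hr' : r - 1 + 1 = r := by omega
    rw [hr'] at h3
    simpa [Nat.mul_comm] using h3
  have e3 : r * (r - 1) ≤ k * r := by
    calc r * (r - 1) = (r - 1) * r := Nat.mul_comm _ _
    _ ≤ k * r := Nat.mul_le_mul_right _ (by omega)
  have e4 : (k - r + 1) * (k + r) + r * (r - 1) = (k + 1) * k := by
    obtain ⟨m, hm⟩ : ∃ m, k = r + m := ⟨k - r, by omega⟩
    subst hm
    obtain ⟨s, hs⟩ : ∃ s, r = 1 + s := Nat.exists_eq_add_of_le hr1
    subst hs
    rw [show 1 + s + m - (1 + s) = m from by omega, show 1 + s - 1 = s from by omega]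
    ring
  generalize hA : (k - r + 1) * (k + r) = A at h e4
  generalize hB : (k + 1) * k = B at e1 e4 ⊢
  generalize hC : r * (r - 1) = C at e2 e3 e4 ⊢
  generalize hD : k * r = D at h e3 ⊢
  omega

/-- For `1 ≤ r ≤ k` and `n = k + 1 + r`, the graph `K_{k-r+1} ∨ (K_r + K_r)` is a chordal
graph of order `n` and minimum degree `k` with `C(k+1, 2) + k * r - r * (r-1) / 2` edges. -/
theorem stmt_8 (k r n : ℕ) (hk : 1 ≤ k) (hr1 : 1 ≤ r) (hrk : r ≤ k) (hn : n = k + 1 + r) :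
    (SimpleGraph.join (⊤ : SimpleGraph (Fin (k - r + 1)))
        ((⊤ : SimpleGraph (Fin r)) ⊕g (⊤ : SimpleGraph (Fin r)))).IsChordal ∧
    Fintype.card (Fin (k - r + 1) ⊕ (Fin r ⊕ Fin r)) = n ∧
    (SimpleGraph.join (⊤ : SimpleGraph (Fin (k - r + 1)))
        ((⊤ : SimpleGraph (Fin r)) ⊕g (⊤ : SimpleGraph (Fin r)))).minDegree = k ∧
    (SimpleGraph.join (⊤ : SimpleGraph (Fin (k - r + 1)))
        ((⊤ : SimpleGraph (Fin r)) ⊕g (⊤ : SimpleGraph (Fin r)))).edgeFinset.card =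
      Nat.choose (k + 1) 2 + k * r - r * (r - 1) / 2 := by
  set G := SimpleGraph.join (⊤ : SimpleGraph (Fin (k - r + 1)))
      ((⊤ : SimpleGraph (Fin r)) ⊕g (⊤ : SimpleGraph (Fin r))) with hGdef
  have hadj := Gadj_iff k r
  rw [← hGdef] at hadj
  have deg_inl : ∀ c : Fin (k - r + 1), G.degree (Sum.inl c) = k + r := by
    intro c
    have hnb : G.neighborFinset (Sum.inl c) = Finset.univ.erase (Sum.inl c) := by
      ext x
      rcases x with d | b | b <;>
        simp [SimpleGraph.mem_neighborFinset, hadj, eq_comm, ne_comm]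
    rw [SimpleGraph.degree, hnb, Finset.card_erase_of_mem (Finset.mem_univ _)]
    simp only [Finset.card_univ, Fintype.card_sum, Fintype.card_fin]
    omega
  have deg_ra : ∀ a : Fin r, G.degree (Sum.inr (Sum.inl a)) = k := by
    intro a
    have hnb : G.neighborFinset (Sum.inr (Sum.inl a)) =
        (Finset.univ.image Sum.inl) ∪
          ((Finset.univ.erase a).image (fun x : Fin r => Sum.inr (Sum.inl x))) := by
      ext x
      rcases x with d | b | b <;>
        simp [SimpleGraph.mem_neighborFinset, hadj, eq_comm, ne_comm]
    rw [SimpleGraph.degree, hnb, Finset.card_union_of_disjoint (by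
        simp [Finset.disjoint_left]),
      Finset.card_image_of_injective _ Sum.inl_injective,
      Finset.card_image_of_injective _ (fun x y hxy => by simpa using hxy),
      Finset.card_erase_of_mem (Finset.mem_univ _)]
    simp only [Finset.card_univ, Fintype.card_fin]
    omega
  have deg_rb : ∀ a : Fin r, G.degree (Sum.inr (Sum.inr a)) = k := by
    intro a
    have hnb : G.neighborFinset (Sum.inr (Sum.inr a)) =
        (Finset.univ.image Sum.inl) ∪
          ((Finset.univ.erase a).image (fun x : Fin r => Sum.inr (Sum.inr x))) := by
      ext x
      rcases x with d | b | b <;>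
        simp [SimpleGraph.mem_neighborFinset, hadj, eq_comm, ne_comm]
    rw [SimpleGraph.degree, hnb, Finset.card_union_of_disjoint (by
        simp [Finset.disjoint_left]),
      Finset.card_image_of_injective _ Sum.inl_injective,
      Finset.card_image_of_injective _ (fun x y hxy => by simpa using hxy),
      Finset.card_erase_of_mem (Finset.mem_univ _)]
    simp only [Finset.card_univ, Fintype.card_fin]
    omega
  refine ⟨?_, ?_, ?_, ?_⟩
  · apply isChordal_of_universal
    intro x y z hxy hnadj hzx hzy t hzt
    have hcross : (∃ a b, x = Sum.inr (Sum.inl a) ∧ y = Sum.inr (Sum.inr b)) ∨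
        (∃ a b, x = Sum.inr (Sum.inr a) ∧ y = Sum.inr (Sum.inl b)) := by
      by_contra hcon
      exact hnadj ((hadj x y).mpr ⟨hxy, hcon⟩)
    rw [hadj] at hzx hzy ⊢
    refine ⟨hzt, ?_⟩
    obtain ⟨c, hz⟩ : ∃ c, z = Sum.inl c := by
      rcases z with c | a' | a'
      · exact ⟨c, rfl⟩
      · exfalso
        rcases hcross with ⟨a, b, hx, hy⟩ | ⟨a, b, hx, hy⟩
        · exact hzy.2 (Or.inl ⟨a', b, rfl, hy⟩)
        · exact hzx.2 (Or.inl ⟨a', a, rfl, hx⟩)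
      · exfalso
        rcases hcross with ⟨a, b, hx, hy⟩ | ⟨a, b, hx, hy⟩
        · exact hzx.2 (Or.inr ⟨a', a, rfl, hx⟩)
        · exact hzy.2 (Or.inr ⟨a', b, rfl, hy⟩)
    subst hz
    rintro (⟨a, b, hfalse, -⟩ | ⟨a, b, hfalse, -⟩) <;> simp at hfalse
  · simp only [Fintype.card_sum, Fintype.card_fin]; omega
  · have : Nonempty (Fin (k - r + 1) ⊕ (Fin r ⊕ Fin r)) := ⟨Sum.inl ⟨0, by omega⟩⟩
    apply le_antisymm
    · have h1 := G.minDegree_le_degree (Sum.inr (Sum.inl ⟨0, hr1⟩))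
      rwa [deg_ra] at h1
    · apply SimpleGraph.le_minDegree_of_forall_le_degree
      rintro (c | a | a)
      · rw [deg_inl]; omega
      · exact (deg_ra a).ge
      · exact (deg_rb a).ge
  · have hsum : ∑ v, G.degree v = 2 * G.edgeFinset.card :=
      SimpleGraph.sum_degrees_eq_twice_card_edges G
    rw [Fintype.sum_sum_type, Fintype.sum_sum_type] at hsum
    simp only [deg_inl, deg_ra, deg_rb, Finset.sum_const, Finset.card_univ, Fintype.card_fin,
      smul_eq_mul] at hsum
    apply arith_aux k r _ hr1 hrk
    rw [← hsum]
    ring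
end

section
/- Let G be a chordal graph that is k-regular, i.e., every vertex of G has degree k. Then every connected component of G is a complete graph on k+1 vertices. -/
open scoped Classical

namespace ChordalAux

open SimpleGraph Walk

variable {V : Type*} {G : SimpleGraph V}

/-- A walk is *induced* if every edge of `G` between support vertices is an edge of the walk. -/
def Ind {v w : V} (p : G.Walk v w) : Prop :=
  ∀ x ∈ p.support, ∀ y ∈ p.support, G.Adj x y → s(x, y) ∈ p.edges

/-- In a path, an edge incident to the first vertex must be the first edge. -/
lemma eq_snd_of_edge_start {v v₁ w y : V} (h1 : G.Adj v v₁) (p' : G.Walk v₁ w)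
    (hp : (Walk.cons h1 p').IsPath) (he : s(v, y) ∈ (Walk.cons h1 p').edges) : y = v₁ := by
  rw [Walk.edges_cons, List.mem_cons] at he
  rcases he with he | he
  · rw [Sym2.eq_iff] at he
    rcases he with ⟨-, rfl⟩ | ⟨rfl, rfl⟩
    · rfl
    · exact absurd rfl h1.ne
  · exact absurd (Walk.fst_mem_support_of_mem_edges p' he)
      ((Walk.cons_isPath_iff h1 p').mp hp).2

/-- Support of takeUntil is a prefix of the support. -/
lemma support_takeUntil_prefix [DecidableEq V] {v w : V} (p : G.Walk v w) {x : V}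
    (hx : x ∈ p.support) : (p.takeUntil x hx).support <+: p.support := by
  refine ⟨(p.dropUntil x hx).support.tail, ?_⟩
  rw [← Walk.support_append, Walk.take_spec]

lemma length_takeUntil_lt_s10 [DecidableEq V] {v w : V} {p : G.Walk v w} (hp : p.IsPath)
    {x b : V} (hx : x ∈ p.support) (hb : b ∈ (p.takeUntil x hx).support) (hbx : b ≠ x) :
    (p.takeUntil b (p.support_takeUntil_subset hx hb)).length < (p.takeUntil x hx).length := by
  by_contra hle
  push_neg at hle
  set qx := p.takeUntil x hx with hqx
  set qb := p.takeUntil b (p.support_takeUntil_subset hx hb) with hqb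
  have hpfx : qx.support <+: qb.support := by
    apply List.prefix_of_prefix_length_le (support_takeUntil_prefix p hx)
      (support_takeUntil_prefix p _)
    simpa [Walk.length_support] using Nat.succ_le_succ hle
  obtain ⟨t, ht⟩ := hpfx
  have hnodup : qb.support.Nodup := (hp.takeUntil _).support_nodup
  have h2 : qb.support.getLast? = some b := by
    rw [List.getLast?_eq_getLast (by simp : qb.support ≠ []), qb.getLast_support]
  rcases List.eq_nil_or_concat t with rfl | ⟨t', z, rfl⟩
  · rw [List.append_nil] at ht
    have h1 : qx.support.getLast? = some x := by
      rw [List.getLast?_eq_getLast (by simp : qx.support ≠ []), qx.getLast_support]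
    rw [ht, h2] at h1
    exact hbx (Option.some_injective _ h1)
  · have hz : z = b := by
      have h3 : qx.support ++ t'.concat z = (qx.support ++ t').concat z := by
        simp [List.concat_eq_append, List.append_assoc]
      rw [← ht, h3, List.concat_eq_append, List.getLast?_concat] at h2
      exact Option.some_injective _ h2
    subst hz
    rw [← ht] at hnodup
    have := List.disjoint_of_nodup_append hnodup
    exact this hb (by simp)

/-- An edge of a path whose endpoints both lie in an initial segment lies in the
initial segment. -/
lemma edge_mem_takeUntil [DecidableEq V] {v w : V} {p : G.Walk v w} (hp : p.IsPath)
    {x a b : V} (hx : x ∈ p.support) (hab : G.Adj a b) (he : s(a, b) ∈ p.edges)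
    (ha : a ∈ (p.takeUntil x hx).support) (hb : b ∈ (p.takeUntil x hx).support) :
    s(a, b) ∈ (p.takeUntil x hx).edges := by
  have hspec := p.take_spec hx
  set q := p.takeUntil x hx with hq
  set r := p.dropUntil x hx with hr
  have hedges : p.edges = q.edges ++ r.edges := by rw [← Walk.edges_append, hspec]
  rw [hedges, List.mem_append] at he
  rcases he with he | he
  · exact he
  · exfalso
    have hsupp : p.support = q.support ++ r.support.tail := by
      rw [← Walk.support_append, hspec]
    have hnodup := hp.support_nodup
    rw [hsupp] at hnodup
    have hdisj := List.disjoint_of_nodup_append hnodup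
    have har : a ∈ r.support := Walk.fst_mem_support_of_mem_edges r he
    have hbr : b ∈ r.support := Walk.snd_mem_support_of_mem_edges r he
    have hxr : r.support = x :: r.support.tail := r.support_eq_cons
    rw [hxr, List.mem_cons] at har hbr
    rcases har with rfl | har
    · rcases hbr with rfl | hbr
      · exact hab.ne rfl
      · exact hdisj hb hbr
    · exact hdisj ha har

lemma adj_of_length_le_one {v x : V} (q : G.Walk v x) (h : q.length ≤ 1) :
    v = x ∨ G.Adj v x := by
  cases q with
  | nil => exact Or.inl rfl
  | cons hadj q' =>
    right
    have : q'.length = 0 := by simpa using h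
    exact (Walk.eq_of_length_eq_zero this) ▸ hadj

lemma card_nbr_sdiff [Fintype V] {k : ℕ} (hreg : G.IsRegularOfDegree k) {a b : V}
    (hab : G.Adj a b) :
    (G.neighborFinset b \ insert a (G.neighborFinset a)).card
      = (G.neighborFinset a \ insert b (G.neighborFinset b)).card := by
  have key : ∀ x y : V, G.Adj x y →
      (G.neighborFinset x \ insert y (G.neighborFinset y)).card
        = k - ((G.neighborFinset x ∩ G.neighborFinset y).card + 1) := by
    intro x y hxy
    have h1 := Finset.card_sdiff_add_card_inter (G.neighborFinset x)
      (insert y (G.neighborFinset y))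
    have h2 : G.neighborFinset x ∩ insert y (G.neighborFinset y)
        = insert y (G.neighborFinset x ∩ G.neighborFinset y) :=
      Finset.inter_insert_of_mem (by rwa [SimpleGraph.mem_neighborFinset])
    have h3 : y ∉ G.neighborFinset x ∩ G.neighborFinset y := by
      simp [SimpleGraph.mem_neighborFinset]
    have h4 : (G.neighborFinset x).card = k := hreg x
    rw [h2, Finset.card_insert_of_notMem h3] at h1
    omega
  rw [key _ _ hab.symm, key _ _ hab, Finset.inter_comm]

lemma no_far_neighbor [Fintype V] (hchordal : G.IsChordal) {v v₁ w u : V}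
    (h1 : G.Adj v v₁) (p' : G.Walk v₁ w) (hp : (Walk.cons h1 p').IsPath)
    (hind : Ind (Walk.cons h1 p')) (huv : G.Adj v u) (hu1 : ¬ G.Adj v₁ u) (huv1 : u ≠ v₁)
    (hunsupp : u ∉ (Walk.cons h1 p').support) :
    ∀ y ∈ (Walk.cons h1 p').support, G.Adj u y → y = v := by
  classical
  by_contra hcon
  push_neg at hcon
  obtain ⟨y₀, hy₀s, hy₀a, hy₀v⟩ := hcon
  set P : G.Walk v w := Walk.cons h1 p' with hP
  set f : V → ℕ := fun y => if h : y ∈ P.support then (P.takeUntil y h).length else 0 with hf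
  set cs : Finset V := P.support.toFinset.filter (fun y => y ≠ v ∧ G.Adj u y) with hcs
  have hne : cs.Nonempty := ⟨y₀, by simp [hcs, List.mem_toFinset, hy₀s, hy₀a, hy₀v]⟩
  obtain ⟨x, hxcs, hmin⟩ := Finset.exists_min_image cs f hne
  rw [hcs, Finset.mem_filter, List.mem_toFinset] at hxcs
  obtain ⟨hx, hxv, hux⟩ := hxcs
  have hxv1 : x ≠ v₁ := fun e => hu1 (e ▸ hux).symm
  have hnadjvx : ¬ G.Adj v x := by
    intro hadj
    exact hxv1 (eq_snd_of_edge_start h1 p' hp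
      (hind v (Walk.start_mem_support P) x hx hadj))
  set q : G.Walk v x := P.takeUntil x hx with hq
  have hq2 : 2 ≤ q.length := by
    by_contra hle
    push_neg at hle
    rcases adj_of_length_le_one q (by omega) with h | h
    · exact hxv h.symm
    · exact hnadjvx h
  have huq : u ∉ q.support := fun h => hunsupp (P.support_takeUntil_subset hx h)
  have hqpath : q.IsPath := hp.takeUntil hx
  have hxq : x ∈ q.support := Walk.end_mem_support q
  set c : G.Walk u u := Walk.cons huv.symm (q.concat hux.symm) with hc
  have hconc_path : (q.concat hux.symm).IsPath := by
    rw [Walk.isPath_def, Walk.support_concat]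
    rw [List.nodup_append]
    exact ⟨hqpath.support_nodup, List.nodup_singleton u,
      by simpa [List.disjoint_singleton] using fun a ha (hau : a = u) => huq (hau ▸ ha)⟩
  have hs_not : s(u, v) ∉ (q.concat hux.symm).edges := by
    intro hmem
    rw [Walk.edges_concat, List.concat_eq_append, List.mem_append, List.mem_singleton] at hmem
    rcases hmem with hmem | hmem
    · exact huq (Walk.fst_mem_support_of_mem_edges q hmem)
    · rw [Sym2.eq_iff] at hmem
      rcases hmem with ⟨rfl, -⟩ | ⟨-, rfl⟩
      · exact huq hxq
      · exact hxv rfl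
  have hcyc : c.IsCycle := (Walk.cons_isCycle_iff _ huv.symm).mpr ⟨hconc_path, hs_not⟩
  have hclen : 3 < c.length := by
    rw [hc, Walk.length_cons, Walk.length_concat]
    omega
  obtain ⟨a, b, hab, ha, hb, hnab⟩ := hchordal c hcyc hclen
  have csupp : c.support = u :: (q.support ++ [u]) := by
    rw [hc, Walk.support_cons, Walk.support_concat]
  have cedges : c.edges = s(u, v) :: (q.edges ++ [s(x, u)]) := by
    rw [hc, Walk.edges_cons, Walk.edges_concat, List.concat_eq_append]
  have hmem_simp : ∀ z, z ∈ c.support → z = u ∨ z ∈ q.support := by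
    intro z hz
    rw [csupp, List.mem_cons, List.mem_append, List.mem_singleton] at hz
    tauto
  have key : ∀ y ∈ q.support, G.Adj u y → s(u, y) ∈ c.edges := by
    intro y hyq hadjy
    by_cases hyv : y = v
    · subst hyv; rw [cedges]; exact List.mem_cons_self
    by_cases hyx : y = x
    · subst hyx
      rw [cedges]
      refine List.mem_cons_of_mem _ (List.mem_append_right _ ?_)
      rw [List.mem_singleton, Sym2.eq_swap]
    · exfalso
      have hyP : y ∈ P.support := P.support_takeUntil_subset hx hyq
      have hycs : y ∈ cs := by
        rw [hcs, Finset.mem_filter, List.mem_toFinset]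
        exact ⟨hyP, hyv, hadjy⟩
      have hle := hmin y hycs
      rw [hf] at hle
      simp only [dif_pos hx, dif_pos hyP] at hle
      exact absurd hle (by
        have := length_takeUntil_lt_s10 hp hx hyq hyx
        omega)
  rcases hmem_simp a ha with rfl | haq
  · rcases hmem_simp b hb with rfl | hbq
    · exact hab.ne rfl
    · exact hnab (key b hbq hab)
  · rcases hmem_simp b hb with rfl | hbq
    · refine hnab ?_
      have := key a haq hab.symm
      rwa [Sym2.eq_swap] at this
    · have hPe : s(a, b) ∈ P.edges :=
        hind a (P.support_takeUntil_subset hx haq) b (P.support_takeUntil_subset hx hbq) hab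
      have hqe : s(a, b) ∈ q.edges := edge_mem_takeUntil hp hx hab hPe haq hbq
      exact hnab (by rw [cedges]; exact List.mem_cons_of_mem _ (List.mem_append_left _ hqe))

lemma extension [Fintype V] {k : ℕ} (hchordal : G.IsChordal) (hreg : G.IsRegularOfDegree k)
    {v w : V} (p : G.Walk v w) (hp : p.IsPath) (hind : Ind p) (hlen : 2 ≤ p.length) :
    ∃ (u : V) (h : G.Adj u v), (Walk.cons h p).IsPath ∧ Ind (Walk.cons h p) := by
  classical
  cases p with
  | nil => simp at hlen
  | @cons _ v₁ _ h1 p' =>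
    cases p' with
    | nil => simp at hlen
    | @cons _ v₂ _ h2 p'' =>
      set P : G.Walk v w := Walk.cons h1 (Walk.cons h2 p'') with hPdef
      have hv2supp : v₂ ∈ (Walk.cons h2 p'').support := by
        rw [Walk.support_cons]
        exact List.mem_cons_of_mem _ (Walk.start_mem_support p'')
      have hvv2 : v ≠ v₂ := by
        intro e
        exact ((Walk.cons_isPath_iff h1 _).mp hp).2 (e ▸ hv2supp)
      have hv2nadj : ¬ G.Adj v v₂ := by
        intro hadj
        have he := hind v (Walk.start_mem_support P) v₂
          (by rw [hPdef, Walk.support_cons]; exact List.mem_cons_of_mem _ hv2supp) hadj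
        exact h2.ne (eq_snd_of_edge_start h1 _ hp he).symm
      have hv2mem : v₂ ∈ G.neighborFinset v₁ \ insert v (G.neighborFinset v) := by
        simp only [Finset.mem_sdiff, SimpleGraph.mem_neighborFinset, Finset.mem_insert]
        exact ⟨h2, by push_neg; exact ⟨fun e => hvv2 e.symm, hv2nadj⟩⟩
      have hcard := card_nbr_sdiff hreg h1
      have hpos : 0 < (G.neighborFinset v \ insert v₁ (G.neighborFinset v₁)).card := by
        rw [← hcard]
        exact Finset.card_pos.mpr ⟨v₂, hv2mem⟩
      obtain ⟨u, hu⟩ := Finset.card_pos.mp hpos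
      simp only [Finset.mem_sdiff, SimpleGraph.mem_neighborFinset, Finset.mem_insert,
        not_or] at hu
      obtain ⟨huv, huv1, hu1⟩ := hu
      have hunsupp : u ∉ P.support := by
        intro hus
        have he := hind v (Walk.start_mem_support P) u hus huv
        exact huv1 (eq_snd_of_edge_start h1 _ hp he)
      have hall := no_far_neighbor hchordal h1 _ hp hind huv hu1 huv1 hunsupp
      refine ⟨u, huv.symm, hp.cons hunsupp, ?_⟩
      intro x hx y hy hxy
      rw [Walk.support_cons, List.mem_cons] at hx hy
      rw [Walk.edges_cons]
      rcases hx with rfl | hx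
      · rcases hy with rfl | hy
        · exact absurd rfl hxy.ne
        · have := hall y hy hxy
          subst this
          exact List.mem_cons_self
      · rcases hy with rfl | hy
        · have := hall x hx hxy.symm
          subst this
          rw [Sym2.eq_swap]
          exact List.mem_cons_self
        · exact List.mem_cons_of_mem _ (hind x hx y hy hxy)

end ChordalAux

/-- If `G` is a `k`-regular chordal graph, then every connected component of `G` is a
complete graph on `k + 1` vertices (i.e. each component has `k + 1` vertices and any two
distinct vertices in a common component are adjacent). -/
theorem stmt_10 {V : Type*} [Fintype V] (G : SimpleGraph V) (k : ℕ)
    (hchordal : G.IsChordal) (hreg : G.IsRegularOfDegree k) :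
    ∀ c : G.ConnectedComponent, c.supp.ncard = k + 1 ∧
      ∀ x ∈ c.supp, ∀ y ∈ c.supp, x ≠ y → G.Adj x y := by
  classical
  have key : ∀ x y z : V, G.Adj x y → G.Adj y z → x ≠ z → G.Adj x z := by
    intro x y z hxy hyz hxz
    by_contra hnadj
    have hpath : (SimpleGraph.Walk.cons hxy (SimpleGraph.Walk.cons hyz SimpleGraph.Walk.nil)).IsPath := by
      rw [SimpleGraph.Walk.isPath_def]
      simp [hxy.ne, hyz.ne, hxz]
    have hind0 : ChordalAux.Ind (SimpleGraph.Walk.cons hxy (SimpleGraph.Walk.cons hyz SimpleGraph.Walk.nil)) := by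
      intro a ha b hb hab
      simp only [SimpleGraph.Walk.support_cons, SimpleGraph.Walk.support_nil,
        List.mem_cons, List.mem_singleton, List.not_mem_nil, or_false] at ha hb
      simp only [SimpleGraph.Walk.edges_cons, SimpleGraph.Walk.edges_nil, List.mem_cons,
        List.mem_singleton, List.not_mem_nil, or_false]
      rcases ha with rfl | rfl | rfl <;> rcases hb with rfl | rfl | rfl <;>
        simp_all [Sym2.eq_iff] <;> tauto
    have grow : ∀ n : ℕ, ∃ (a b : V) (p : G.Walk a b),
        p.IsPath ∧ ChordalAux.Ind p ∧ p.length = n + 2 := by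
      intro n
      induction n with
      | zero => exact ⟨x, z, _, hpath, hind0, rfl⟩
      | succ m ih =>
        obtain ⟨a, b, p, hp, hi, hl⟩ := ih
        obtain ⟨u, h, hp', hi'⟩ := ChordalAux.extension hchordal hreg p hp hi (by omega)
        exact ⟨u, b, _, hp', hi', by rw [SimpleGraph.Walk.length_cons]; omega⟩
    obtain ⟨a, b, p, hp, -, hl⟩ := grow (Fintype.card V)
    have := hp.length_lt
    omega
  have adj_of_walk : ∀ {a b : V} (_ : G.Walk a b), a ≠ b → G.Adj a b := by
    intro a b p
    induction p with
    | nil => intro h; exact absurd rfl h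
    | @cons a c b h q ih =>
      intro hne
      by_cases hcb : c = b
      · subst hcb; exact h
      · exact key _ _ _ h (ih hcb) hne
  intro c
  obtain ⟨v, rfl⟩ := c.exists_rep
  have hsupp : (G.connectedComponentMk v).supp = insert v {x | G.Adj v x} := by
    ext x
    simp only [SimpleGraph.ConnectedComponent.mem_supp_iff, SimpleGraph.ConnectedComponent.eq,
      Set.mem_insert_iff, Set.mem_setOf_eq]
    constructor
    · intro hr
      by_cases hxv : x = v
      · exact Or.inl hxv
      · obtain ⟨p⟩ := hr
        exact Or.inr (adj_of_walk p hxv).symm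
    · rintro (rfl | h)
      · exact SimpleGraph.Reachable.refl x
      · exact h.symm.reachable
  constructor
  · show (G.connectedComponentMk v).supp.ncard = k + 1
    rw [hsupp]
    have hvn : v ∉ {x | G.Adj v x} := by simp
    rw [Set.ncard_insert_of_notMem hvn (Set.toFinite _)]
    have hns : {x | G.Adj v x} = G.neighborSet v := rfl
    rw [hns, Set.ncard_eq_toFinset_card']
    have : (G.neighborSet v).toFinset = G.neighborFinset v := by
      rw [SimpleGraph.neighborFinset_def]
    rw [this]
    have := hreg v
    rw [SimpleGraph.degree] at this
    omega
  · intro x hx y hy hxy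
    have hx' : x ∈ (G.connectedComponentMk v).supp := hx
    have hy' : y ∈ (G.connectedComponentMk v).supp := hy
    rw [hsupp, Set.mem_insert_iff, Set.mem_setOf_eq] at hx' hy'
    clear hx hy
    rename' hx' => hx, hy' => hy
    rcases hx with rfl | hx
    · rcases hy with rfl | hy
      · exact absurd rfl hxy
      · exact hy
    · rcases hy with rfl | hy
      · exact hx.symm
      · exact key x v y hx.symm hy hxy
end
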